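/- arXiv:1404.4306 — 4 statements merged into one kernel-verified Lean document; each statement's English description precedes it below -/
import Mathlib

section
/- Let Φ be a Musielak–Orlicz function on a σ-finite non-atomic measure space (T,Σ,μ). If u : T → [0,∞) is measurable and Φ(t,u(t)) < ∞ for μ-a.e. t, then there exists a sequence of non-negative measurable functions (u_n) with u_n ↑ u pointwise and ∫_T Φ*(t, Φ'_-(t, u_n(t))) dμ < ∞ for every n. -/
open MeasureTheory ENNReal NNReal Filter Topology

noncomputable section

/-- A measure is non-atomic if every set of positive measure contains a
measurable subset of strictly smaller positive measure. -/
def IsNonatomic {T : Type*} [MeasurableSpace T] (μ : Measure T) : Prop :=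
  ∀ s : Set T, MeasurableSet s → 0 < μ s →
    ∃ t : Set T, t ⊆ s ∧ MeasurableSet t ∧ 0 < μ t ∧ μ t < μ s

/-- A Musielak--Orlicz function on `(T, Σ, μ)`. -/
structure MOFunction (T : Type*) [MeasurableSpace T] (μ : Measure T) where
  toFun : T → ℝ≥0∞ → ℝ≥0∞
  measurable' : ∀ u : ℝ≥0∞, Measurable fun t => toFun t u
  convex' : ∀ᵐ t ∂μ, ∀ a b : ℝ≥0∞, ∀ p : ℝ≥0, p ≤ 1 →
    toFun t (p • a + (1 - p) • b) ≤ p • toFun t a + (1 - p) • toFun t b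
  lsc' : ∀ᵐ t ∂μ, LowerSemicontinuous (toFun t)
  zero' : ∀ᵐ t ∂μ, toFun t 0 = 0
  limZero' : ∀ᵐ t ∂μ, Tendsto (toFun t) (nhdsWithin 0 (Set.Ioi 0)) (nhds 0)
  top' : ∀ᵐ t ∂μ, toFun t ⊤ = ⊤

namespace MOFunction

variable {T : Type*} [MeasurableSpace T] {μ : Measure T}

/-- Left derivative of a (convex) function `φ : ℝ≥0∞ → ℝ≥0∞`, with the
convention that it vanishes at `0`. -/
def leftDeriv (φ : ℝ≥0∞ → ℝ≥0∞) (u : ℝ≥0∞) : ℝ≥0∞ :=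
  ⨆ x ∈ Set.Iio u, (φ u - φ x) / (u - x)

/-- Right derivative of a (convex) function `φ : ℝ≥0∞ → ℝ≥0∞`. -/
def rightDeriv (φ : ℝ≥0∞ → ℝ≥0∞) (u : ℝ≥0∞) : ℝ≥0∞ :=
  ⨅ x ∈ Set.Ioi u, (φ x - φ u) / (x - u)

/-- The complementary (Young conjugate) function `Φ*`. -/
def conj (P : MOFunction T μ) : T → ℝ≥0∞ → ℝ≥0∞ :=
  fun t v => ⨆ u ∈ Set.Ioi (0 : ℝ≥0∞), u * v - P.toFun t u

/-- The modular `I_Φ(u) = ∫ Φ(t, |u(t)|) dμ`. -/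
def modular (P : MOFunction T μ) (u : T → ℝ) : ℝ≥0∞ :=
  ∫⁻ t, P.toFun t (ENNReal.ofReal |u t|) ∂μ

/-- The modular of the complementary function, `I_{Φ*}`. -/
def modularConj (P : MOFunction T μ) (v : T → ℝ) : ℝ≥0∞ :=
  ∫⁻ t, P.conj t (ENNReal.ofReal |v t|) ∂μ

/-- Membership in the Musielak--Orlicz space `L^Φ`. -/
def memLPhi (P : MOFunction T μ) (u : T → ℝ) : Prop :=
  Measurable u ∧ ∃ l : ℝ, 0 < l ∧ P.modular (fun t => l * u t) < ⊤

/-- Membership in `L^{Φ*}`. -/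
def memLPhiConj (P : MOFunction T μ) (v : T → ℝ) : Prop :=
  Measurable v ∧ ∃ l : ℝ, 0 < l ∧ P.modularConj (fun t => l * v t) < ⊤

/-- The Luxemburg norm on `L^Φ`. -/
def luxNorm (P : MOFunction T μ) (u : T → ℝ) : ℝ :=
  sInf {l : ℝ | 0 < l ∧ P.modular (fun t => u t / l) ≤ 1}

/-- The Luxemburg norm on `L^{Φ*}`. -/
def luxNormConj (P : MOFunction T μ) (v : T → ℝ) : ℝ :=
  sInf {l : ℝ | 0 < l ∧ P.modularConj (fun t => v t / l) ≤ 1}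

/-- The Orlicz norm on `L^Φ`. -/
def orliczNorm (P : MOFunction T μ) (u : T → ℝ) : ℝ :=
  sSup {r : ℝ | ∃ v : T → ℝ, Measurable v ∧ P.modularConj v ≤ 1 ∧
    r = |∫ t, u t * v t ∂μ|}

/-- The Orlicz norm on `L^{Φ*}`. -/
def orliczNormConj (P : MOFunction T μ) (v : T → ℝ) : ℝ :=
  sSup {r : ℝ | ∃ u : T → ℝ, Measurable u ∧ P.modular u ≤ 1 ∧
    r = |∫ t, u t * v t ∂μ|}

/-- The Amemiya functional `inf_{k>0} (1 + I_Φ(ku))/k` (equal to the Orlicz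
norm). -/
def amemiya (P : MOFunction T μ) (u : T → ℝ) : ℝ≥0∞ :=
  ⨅ k ∈ Set.Ioi (0 : ℝ), (1 + P.modular (fun t => k * u t)) / ENNReal.ofReal k

/-- The set `K(u)` of positive numbers attaining the infimum in the Amemiya
norm. -/
def Kset (P : MOFunction T μ) (u : T → ℝ) : Set ℝ :=
  {k | 0 < k ∧ (1 + P.modular (fun t => k * u t)) / ENNReal.ofReal k = P.amemiya u}

/-- `k_u^* = inf{k > 0 : I_{Φ*}(Φ'_+(t, |k u(t)|)) ≥ 1}`. -/
def kStar (P : MOFunction T μ) (u : T → ℝ) : ℝ :=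
  sInf {k : ℝ | 0 < k ∧
    1 ≤ ∫⁻ t, P.conj t (rightDeriv (P.toFun t) (ENNReal.ofReal (k * |u t|))) ∂μ}

/-- `b_{Φ*}(t) = sup{v ≥ 0 : Φ*(t,v) < ∞}`. -/
def bConj (P : MOFunction T μ) (t : T) : ℝ≥0∞ :=
  sSup {v : ℝ≥0∞ | P.conj t v < ⊤}

/-- `a_{Φ*}(t) = sup{v ≥ 0 : Φ*(t,v) = 0}`. -/
def aConj (P : MOFunction T μ) (t : T) : ℝ≥0∞ :=
  sSup {v : ℝ≥0∞ | P.conj t v = 0}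

/-- The `Δ₂`-condition. -/
def Delta2 (P : MOFunction T μ) : Prop :=
  ∃ (K : ℝ≥0∞) (f : T → ℝ≥0∞), Measurable f ∧ (∫⁻ t, P.toFun t (f t) ∂μ) < ⊤ ∧
    ∀ᵐ t ∂μ, ∀ u : ℝ≥0∞, f t ≤ u → P.toFun t (2 * u) ≤ K * P.toFun t u

/-- Dual norm of a functional with respect to the Luxemburg norm. -/
def dualNormLux (P : MOFunction T μ) (f : (T → ℝ) →ₗ[ℝ] ℝ) : ℝ :=
  sSup {r : ℝ | ∃ u : T → ℝ, P.memLPhi u ∧ P.luxNorm u ≤ 1 ∧ r = |f u|}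

/-- Dual norm of a functional with respect to the Orlicz norm. -/
def dualNormOrlicz (P : MOFunction T μ) (f : (T → ℝ) →ₗ[ℝ] ℝ) : ℝ :=
  sSup {r : ℝ | ∃ u : T → ℝ, P.memLPhi u ∧ P.orliczNorm u ≤ 1 ∧ r = |f u|}

/-- The order continuous part `f_c(u) = inf{sup_n f(u_n) : 0 ≤ u_n ↑ u}` of a
(positive) functional, evaluated at a nonnegative `u`. -/
def orderContPart (P : MOFunction T μ) (f : (T → ℝ) →ₗ[ℝ] ℝ) (u : T → ℝ) : ℝ :=
  sInf {c : ℝ | ∃ w : ℕ → T → ℝ, (∀ n t, 0 ≤ w n t) ∧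
    (∀ n t, w n t ≤ w (n + 1) t) ∧
    (∀ t, Tendsto (fun n => w n t) atTop (nhds (u t))) ∧ c = ⨆ n, f (w n)}

/-- A functional is purely singular if its order continuous component
vanishes. -/
def PurelySingular (P : MOFunction T μ) (f : (T → ℝ) →ₗ[ℝ] ℝ) : Prop :=
  ∀ u : T → ℝ, P.memLPhi u → (∀ t, 0 ≤ u t) → P.orderContPart f u = 0

/-- `f` is a support functional at `u` in `L_0^Φ`. -/
def IsSupportAt (P : MOFunction T μ) (f : (T → ℝ) →ₗ[ℝ] ℝ) (u : T → ℝ) : Prop :=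
  P.dualNormOrlicz f = 1 ∧ f u = P.orliczNorm u

/-- `u` is a smooth point of `L_0^Φ`: it has exactly one support functional
(as a functional on `L^Φ`). -/
def IsSmoothPoint (P : MOFunction T μ) (u : T → ℝ) : Prop :=
  (∃ f : (T → ℝ) →ₗ[ℝ] ℝ, P.IsSupportAt f u) ∧
    ∀ f g : (T → ℝ) →ₗ[ℝ] ℝ, P.IsSupportAt f u → P.IsSupportAt g u →
      ∀ w : T → ℝ, P.memLPhi w → f w = g w

/-- `θ_Φ(u) = inf{λ > 0 : I_Φ(u/λ) < ∞}`. -/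
def thetaPhi (P : MOFunction T μ) (u : T → ℝ) : ℝ :=
  sInf {l : ℝ | 0 < l ∧ P.modular (fun t => u t / l) < ⊤}

end MOFunction

open MOFunction

variable {T : Type*} [MeasurableSpace T] {μ : Measure T}

lemma mono_of_convex {φ : ℝ≥0∞ → ℝ≥0∞}
    (hconv : ∀ a b : ℝ≥0∞, ∀ p : ℝ≥0, p ≤ 1 →
      φ (p • a + (1 - p) • b) ≤ p • φ a + (1 - p) • φ b)
    (hzero : φ 0 = 0) (htop : φ ⊤ = ⊤) : Monotone φ := by
  intro a b hab
  rcases eq_or_lt_of_le hab with rfl | hab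
  · exact le_rfl
  rcases eq_or_ne b ⊤ with rfl | hb
  · simp [htop]
  have hb0 : b ≠ 0 := fun h => not_lt_bot (h ▸ hab)
  set p : ℝ≥0 := a.toNNReal / b.toNNReal with hp
  have hbnn : b.toNNReal ≠ 0 := by
    simp [ENNReal.toNNReal_eq_zero_iff, hb0, hb]
  have hp1 : p ≤ 1 := by
    rw [hp, div_le_one (pos_iff_ne_zero.mpr hbnn)]
    exact ENNReal.toNNReal_mono hb hab.le
  have hcomb : (p : ℝ≥0∞) * b = a := by
    rw [hp, ENNReal.coe_div hbnn, ENNReal.coe_toNNReal hb,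
      ENNReal.coe_toNNReal (hab.trans_le le_top).ne]
    exact ENNReal.div_mul_cancel (by simpa [ENNReal.coe_toNNReal hb] using hb0)
      hb
  have := hconv b 0 p hp1
  simp only [smul_zero, add_zero, ENNReal.smul_def, smul_eq_mul] at this
  rw [hcomb, hzero, mul_zero, add_zero] at this
  exact this.trans (by
    calc (p:ℝ≥0∞) * φ b ≤ 1 * φ b := by
          gcongr
          exact_mod_cast hp1
      _ = φ b := one_mul _)

lemma slope_mul_le {φ : ℝ≥0∞ → ℝ≥0∞}
    (hconv : ∀ a b : ℝ≥0∞, ∀ p : ℝ≥0, p ≤ 1 →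
      φ (p • a + (1 - p) • b) ≤ p • φ a + (1 - p) • φ b)
    (htop : φ ⊤ = ⊤) {x w s : ℝ≥0∞} (hxw : x < w) (hws : w < s) :
    (φ w - φ x) / (w - x) * (s - w) ≤ φ s := by
  rcases eq_or_ne s ⊤ with rfl | hs
  · rw [htop]; exact le_top
  rcases le_or_gt (φ w) (φ x) with hle | hlt
  · rw [tsub_eq_zero_of_le hle, ENNReal.zero_div, zero_mul]; exact zero_le
  rcases eq_or_ne (φ s) ⊤ with hφs | hφs
  · rw [hφs]; exact le_top
  have hφx : φ x ≠ ⊤ := fun h => by simp [h] at hlt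
  have hwt : w ≠ ⊤ := (hws.trans_le le_top).ne
  have hxt : x ≠ ⊤ := (hxw.trans hws).trans_le le_top |>.ne
  set X := x.toReal with hX
  set W := w.toReal with hW
  set S := s.toReal with hS
  have hXW : X < W := ENNReal.toReal_lt_toReal hxt hwt |>.mpr hxw
  have hWS : W < S := ENNReal.toReal_lt_toReal hwt hs |>.mpr hws
  have hX0 : 0 ≤ X := ENNReal.toReal_nonneg
  have hSX : 0 < S - X := by linarith
  set p : ℝ≥0 := ⟨(S - W) / (S - X), div_nonneg (by linarith) (by linarith)⟩ with hp
  have hp1 : p ≤ 1 := by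
    rw [← NNReal.coe_le_coe]
    show (S - W) / (S - X) ≤ ((1 : ℝ≥0) : ℝ)
    simp only [NNReal.coe_mk, NNReal.coe_one]
    rw [div_le_one hSX]; linarith
  have hpR : (p : ℝ) = (S - W) / (S - X) := rfl
  have h1pR : ((1 - p : ℝ≥0) : ℝ) = (W - X) / (S - X) := by
    rw [NNReal.coe_sub hp1, hpR, NNReal.coe_one]
    field_simp
    ring
  have hcomb : (p : ℝ≥0∞) * x + ((1 - p : ℝ≥0) : ℝ≥0∞) * s = w := by
    rw [← ENNReal.ofReal_toReal hxt, ← ENNReal.ofReal_toReal hs,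
      ← ENNReal.ofReal_toReal hwt]
    rw [show ((p : ℝ≥0) : ℝ≥0∞) = ENNReal.ofReal (p : ℝ) from
        ENNReal.ofReal_coe_nnreal.symm,
      show ((1 - p : ℝ≥0) : ℝ≥0∞) = ENNReal.ofReal ((1 - p : ℝ≥0) : ℝ) from
        ENNReal.ofReal_coe_nnreal.symm,
      ← ENNReal.ofReal_mul p.coe_nonneg, ← ENNReal.ofReal_mul (1 - p).coe_nonneg,
      ← ENNReal.ofReal_add (mul_nonneg p.coe_nonneg hX0)
        (mul_nonneg (1 - p).coe_nonneg (by linarith))]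
    congr 1
    rw [hpR, h1pR]
    show (S - W) / (S - X) * X + (W - X) / (S - X) * S = W
    field_simp
    ring
  have hineq := hconv x s p hp1
  simp only [ENNReal.smul_def, smul_eq_mul] at hineq
  rw [hcomb] at hineq
  -- the right side is finite
  have hrhs : (p : ℝ≥0∞) * φ x + ((1 - p : ℝ≥0) : ℝ≥0∞) * φ s ≠ ⊤ := by
    apply ENNReal.add_ne_top.mpr
    constructor
    · exact ENNReal.mul_ne_top ENNReal.coe_ne_top hφx
    · exact ENNReal.mul_ne_top ENNReal.coe_ne_top hφs
  have hφw : φ w ≠ ⊤ := fun h => hrhs (top_le_iff.mp (h ▸ hineq))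
  set Px := (φ x).toReal with hPx
  set Pw := (φ w).toReal with hPw
  set Ps := (φ s).toReal with hPs
  have hPx0 : 0 ≤ Px := ENNReal.toReal_nonneg
  have hPs0 : 0 ≤ Ps := ENNReal.toReal_nonneg
  have hPxw : Px ≤ Pw := (ENNReal.toReal_le_toReal hφx hφw).mpr hlt.le
  have hR : Pw ≤ (p : ℝ) * Px + ((1 - p : ℝ≥0) : ℝ) * Ps := by
    have := (ENNReal.toReal_le_toReal hφw hrhs).mpr hineq
    rwa [ENNReal.toReal_add (ENNReal.mul_ne_top ENNReal.coe_ne_top hφx)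
      (ENNReal.mul_ne_top ENNReal.coe_ne_top hφs), ENNReal.toReal_mul,
      ENNReal.toReal_mul, ENNReal.coe_toReal, ENNReal.coe_toReal] at this
  -- convert goal to reals
  have hgoal : (Pw - Px) / (W - X) * (S - W) ≤ Ps := by
    rw [hpR, h1pR] at hR
    have hR' : Pw * (S - X) ≤ (S - W) * Px + (W - X) * Ps := by
      have h := mul_le_mul_of_nonneg_right hR hSX.le
      calc Pw * (S - X) ≤ ((S - W) / (S - X) * Px + (W - X) / (S - X) * Ps) * (S - X) := h
        _ = (S - W) * Px + (W - X) * Ps := by field_simp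
    rw [div_mul_eq_mul_div, div_le_iff₀ (by linarith)]
    nlinarith [hR', mul_nonneg (hPx0.trans hPxw) (sub_nonneg.mpr hXW.le)]
  have e1 : φ w - φ x = ENNReal.ofReal (Pw - Px) := by
    rw [ENNReal.ofReal_sub _ hPx0, ENNReal.ofReal_toReal hφw, ENNReal.ofReal_toReal hφx]
  have e2 : w - x = ENNReal.ofReal (W - X) := by
    rw [ENNReal.ofReal_sub _ hX0, ENNReal.ofReal_toReal hwt, ENNReal.ofReal_toReal hxt]
  have e3 : s - w = ENNReal.ofReal (S - W) := by
    rw [ENNReal.ofReal_sub _ ENNReal.toReal_nonneg, ENNReal.ofReal_toReal hs,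
      ENNReal.ofReal_toReal hwt]
  calc (φ w - φ x) / (w - x) * (s - w)
      = ENNReal.ofReal ((Pw - Px) / (W - X) * (S - W)) := by
        rw [e1, e2, e3, ← ENNReal.ofReal_div_of_pos (by linarith),
          ← ENNReal.ofReal_mul (div_nonneg (by linarith) (by linarith))]
    _ ≤ ENNReal.ofReal Ps := ENNReal.ofReal_le_ofReal hgoal
    _ = φ s := ENNReal.ofReal_toReal hφs

lemma MOFunction.leftDeriv_zero (φ : ℝ≥0∞ → ℝ≥0∞) : MOFunction.leftDeriv φ 0 = 0 :=
  le_antisymm (iSup₂_le fun x hx => absurd hx (by simp)) (zero_le)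

lemma MOFunction.leftDeriv_le_div {φ : ℝ≥0∞ → ℝ≥0∞}
    (hconv : ∀ a b : ℝ≥0∞, ∀ p : ℝ≥0, p ≤ 1 →
      φ (p • a + (1 - p) • b) ≤ p • φ a + (1 - p) • φ b)
    (htop : φ ⊤ = ⊤) {w s : ℝ≥0∞} (hws : w < s) (hs : s ≠ ⊤) :
    MOFunction.leftDeriv φ w ≤ φ s / (s - w) := by
  refine iSup₂_le fun x hx => ?_
  rw [ENNReal.le_div_iff_mul_le (Or.inl (tsub_pos_of_lt hws).ne')
    (Or.inl (ne_top_of_le_ne_top hs tsub_le_self))]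
  exact slope_mul_le hconv htop hx hws

lemma conj_le_mul {φ : ℝ≥0∞ → ℝ≥0∞}
    (hconv : ∀ a b : ℝ≥0∞, ∀ p : ℝ≥0, p ≤ 1 →
      φ (p • a + (1 - p) • b) ≤ p • φ a + (1 - p) • φ b)
    (htop : φ ⊤ = ⊤) (w : ℝ≥0∞) :
    (⨆ s ∈ Set.Ioi (0 : ℝ≥0∞), s * MOFunction.leftDeriv φ w - φ s) ≤ w * MOFunction.leftDeriv φ w := by
  refine iSup₂_le fun s hs => ?_
  rw [tsub_le_iff_right]
  rw [MOFunction.leftDeriv, ENNReal.mul_iSup]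
  refine iSup_le fun x => ?_
  rw [ENNReal.mul_iSup]
  refine iSup_le fun hx => ?_
  set c := (φ w - φ x) / (w - x) with hc
  have hcv : c ≤ MOFunction.leftDeriv φ w := by
    rw [MOFunction.leftDeriv]
    exact le_iSup₂ (f := fun x _ => (φ w - φ x) / (w - x)) x hx
  rcases le_or_gt s w with hsw | hws
  · exact le_add_right (mul_le_mul' hsw hcv)
  · calc s * c = (w + (s - w)) * c := by rw [add_tsub_cancel_of_le hws.le]
      _ = w * c + (s - w) * c := by rw [add_mul]
      _ ≤ w * MOFunction.leftDeriv φ w + φ s := by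
          refine add_le_add (mul_le_mul' le_rfl hcv) ?_
          rw [mul_comm]
          exact slope_mul_le hconv htop hx hws

lemma sup_rat_eq {ψ : ℝ≥0∞ → ℝ≥0∞} (hmono : Monotone ψ)
    (hlsc : LowerSemicontinuous ψ) (hzero : ψ 0 = 0) {r : ℝ} (hr : 0 ≤ r) :
    (⨆ q : ℚ, if 0 < (q : ℝ) ∧ (q : ℝ) < r then ψ (ENNReal.ofReal (q : ℝ)) else 0)
      = ψ (ENNReal.ofReal r) := by
  rcases eq_or_lt_of_le hr with rfl | hr'
  · simp only [ENNReal.ofReal_zero, hzero]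
    refine le_antisymm (iSup_le fun q => ?_) (zero_le)
    split_ifs with h
    · exact absurd (h.1.trans h.2) (lt_irrefl 0)
    · exact le_rfl
  set U := ENNReal.ofReal r with hU
  have hU0 : 0 < U := ENNReal.ofReal_pos.mpr hr'
  have hUt : U ≠ ⊤ := ENNReal.ofReal_ne_top
  refine le_antisymm (iSup_le fun q => ?_) (le_of_forall_lt fun y hy => ?_)
  · split_ifs with h
    · exact hmono (ENNReal.ofReal_le_ofReal h.2.le)
    · exact zero_le
  · have hev : {x | y < ψ x} ∈ 𝓝 U := hlsc U y hy
    obtain ⟨l, hl, hsub⟩ := exists_Ioc_subset_of_mem_nhds hev ⟨0, hU0⟩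
    have hlt : l ≠ ⊤ := (hl.trans_le le_top).ne
    have hl' : l.toReal < r := by
      have := (ENNReal.toReal_lt_toReal hlt hUt).mpr hl
      rwa [hU, ENNReal.toReal_ofReal hr] at this
    obtain ⟨q, hq1, hq2⟩ := exists_rat_btwn (show max l.toReal 0 < r from max_lt hl' hr')
    have hq0 : 0 < (q : ℝ) := (le_max_right _ _).trans_lt hq1
    have hmem : ENNReal.ofReal (q : ℝ) ∈ Set.Ioc l U := by
      constructor
      · rw [← ENNReal.ofReal_toReal hlt]
        exact (ENNReal.ofReal_lt_ofReal_iff hq0).mpr ((le_max_left _ _).trans_lt hq1)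
      · exact ENNReal.ofReal_le_ofReal hq2.le
    have hyq : y < ψ (ENNReal.ofReal (q : ℝ)) := hsub hmem
    refine hyq.trans_le ?_
    refine le_trans ?_ (le_iSup _ q)
    rw [if_pos ⟨hq0, hq2⟩]

/-- approximation from below with finite conjugate modular of the
left derivative. -/
theorem stmt0 [SigmaFinite μ] (hna : IsNonatomic μ) (P : MOFunction T μ)
    (u : T → ℝ) (hu : Measurable u) (hpos : ∀ t, 0 ≤ u t)
    (hfin : ∀ᵐ t ∂μ, P.toFun t (ENNReal.ofReal (u t)) < ⊤) :
    ∃ un : ℕ → T → ℝ, (∀ n, Measurable (un n)) ∧ (∀ n t, 0 ≤ un n t) ∧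
      (∀ n t, un n t ≤ un (n + 1) t) ∧
      (∀ t, Tendsto (fun n => un n t) atTop (nhds (u t))) ∧
      ∀ n, (∫⁻ t, P.conj t (leftDeriv (P.toFun t) (ENNReal.ofReal (un n t))) ∂μ) < ⊤ := by
  classical
  set φ := P.toFun with hφdef
  have hae : ∀ᵐ t ∂μ,
      (∀ a b : ℝ≥0∞, ∀ p : ℝ≥0, p ≤ 1 →
        φ t (p • a + (1 - p) • b) ≤ p • φ t a + (1 - p) • φ t b) ∧
      LowerSemicontinuous (φ t) ∧ φ t 0 = 0 ∧ φ t ⊤ = ⊤ ∧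
      φ t (ENNReal.ofReal (u t)) < ⊤ :=
    ((P.convex'.and P.lsc').and ((P.zero'.and P.top').and hfin)).mono (by tauto)
  obtain ⟨N, hSN, hNm, hN0⟩ := exists_measurable_superset_of_null (ae_iff.mp hae)
  have hgood : ∀ t ∉ N,
      (∀ a b : ℝ≥0∞, ∀ p : ℝ≥0, p ≤ 1 →
        φ t (p • a + (1 - p) • b) ≤ p • φ t a + (1 - p) • φ t b) ∧
      LowerSemicontinuous (φ t) ∧ φ t 0 = 0 ∧ φ t ⊤ = ⊤ ∧
      φ t (ENNReal.ofReal (u t)) < ⊤ :=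
    fun t ht => not_not.mp (fun h => ht (hSN h))
  set h : T → ℝ≥0∞ := fun t => ⨆ q : ℚ,
    if 0 < (q : ℝ) ∧ (q : ℝ) < u t then φ t (ENNReal.ofReal (q : ℝ)) else 0 with hhdef
  have hhmeas : Measurable h := by
    refine Measurable.iSup fun q => Measurable.ite ?_ (P.measurable' _) measurable_const
    have : {t | 0 < (q : ℝ) ∧ (q : ℝ) < u t}
        = {t | 0 < (q : ℝ)} ∩ {t | (q : ℝ) < u t} := rfl
    rw [this]
    exact (MeasurableSet.const _).inter (measurableSet_lt measurable_const hu)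
  have hheq : ∀ t ∉ N, h t = φ t (ENNReal.ofReal (u t)) := by
    intro t ht
    obtain ⟨hconv, hlsc, hzero, htop, _⟩ := hgood t ht
    exact sup_rat_eq (mono_of_convex hconv hzero htop) hlsc hzero (hpos t)
  set B : ℕ → Set T := fun n => (spanningSets μ n ∩ {t | h t ≤ n}) \ N with hBdef
  have hBmeas : ∀ n, MeasurableSet (B n) := fun n =>
    ((measurableSet_spanningSets μ n).inter
      (measurableSet_le hhmeas measurable_const)).diff hNm
  have hBmono : ∀ n, B n ⊆ B (n + 1) := by
    intro n
    refine Set.diff_subset_diff_left (Set.inter_subset_inter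
      (monotone_spanningSets μ (Nat.le_succ n)) ?_)
    intro t ht
    have h1 : h t ≤ (n : ℝ≥0∞) := ht
    exact le_trans h1 (Nat.cast_le.mpr (Nat.le_succ n))
  have hBnotN : ∀ n t, t ∈ B n → t ∉ N := fun n t ht => ht.2
  set un : ℕ → T → ℝ := fun n t =>
    if t ∈ B n then ((n : ℝ) / (n + 1)) * u t else if t ∈ N then u t else 0 with hundef
  have hunnn : ∀ n t, 0 ≤ un n t := by
    intro n t
    simp only [hundef]
    split_ifs
    · exact mul_nonneg (by positivity) (hpos t)
    · exact hpos t
    · exact le_rfl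
  refine ⟨un, ?_, hunnn, ?_, ?_, ?_⟩
  · intro n
    exact Measurable.ite (hBmeas n) (measurable_const.mul hu)
      (Measurable.ite hNm hu measurable_const)
  · intro n t
    by_cases h1 : t ∈ B n
    · have h2 : t ∈ B (n + 1) := hBmono n h1
      simp only [hundef, if_pos h1, if_pos h2]
      refine mul_le_mul_of_nonneg_right ?_ (hpos t)
      rw [div_le_div_iff₀ (by positivity) (by positivity)]
      push_cast
      nlinarith [sq_nonneg ((n : ℝ) + 1)]
    · simp only [hundef, if_neg h1]
      by_cases h2 : t ∈ N
      · have h3 : t ∉ B (n + 1) := fun hc => hBnotN _ _ hc h2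
        simp [if_pos h2, if_neg h3]
      · simp only [if_neg h2]
        by_cases h3 : t ∈ B (n + 1)
        · simp only [if_pos h3]
          exact mul_nonneg (by positivity) (hpos t)
        · simp [if_neg h3, h2]
  · intro t
    by_cases hN : t ∈ N
    · have hconst : ∀ n, un n t = u t := by
        intro n
        have : t ∉ B n := fun hc => hBnotN _ _ hc hN
        simp [hundef, this, hN]
      exact Tendsto.congr (fun n => (hconst n).symm) tendsto_const_nhds
    · obtain ⟨hconv, hlsc, hzero, htop, hfin'⟩ := hgood t hN
      have hht : h t ≠ ⊤ := by rw [hheq t hN]; exact hfin'.ne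
      obtain ⟨m1, hm1⟩ : ∃ m1, t ∈ spanningSets μ m1 := by
        have := Set.mem_univ t
        rw [← iUnion_spanningSets μ] at this
        exact Set.mem_iUnion.mp this
      obtain ⟨m2, hm2⟩ := ENNReal.exists_nat_gt hht
      have hevent : ∀ n ≥ max m1 m2, t ∈ B n := by
        intro n hn
        refine ⟨⟨monotone_spanningSets μ (le_trans (le_max_left _ _) hn) hm1, ?_⟩, hN⟩
        have h2 : (m2 : ℝ≥0∞) ≤ n := by exact_mod_cast le_trans (le_max_right _ _) hn
        exact le_trans hm2.le h2
      have hlim : Tendsto (fun n : ℕ => ((n : ℝ) / (n + 1)) * u t) atTop (𝓝 (u t)) := by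
        have h1 := (tendsto_natCast_div_add_atTop (1 : ℝ)).mul_const (u t)
        rwa [one_mul] at h1
      refine Tendsto.congr' ?_ hlim
      filter_upwards [eventually_ge_atTop (max m1 m2)] with n hn
      simp [hundef, hevent n hn]
  · intro n
    have hbound : ∀ᵐ t ∂μ, P.conj t (leftDeriv (φ t) (ENNReal.ofReal (un n t)))
        ≤ (B n).indicator (fun _ => ((n : ℝ≥0∞) * n)) t := by
      have hNae : ∀ᵐ t ∂μ, t ∉ N := by
        rw [ae_iff]
        simpa [not_not] using hN0
      filter_upwards [hNae] with t ht
      obtain ⟨hconv, hlsc, hzero, htop, hfin'⟩ := hgood t ht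
      have hconj0 : P.conj t (leftDeriv (φ t) 0) ≤ 0 := by
        have h0 := conj_le_mul hconv htop 0
        rw [zero_mul] at h0
        exact h0
      by_cases hBt : t ∈ B n
      · rw [Set.indicator_of_mem hBt]
        simp only [hundef, if_pos hBt]
        rcases eq_or_lt_of_le (hpos t) with hu0 | hu0
        · rw [← hu0, mul_zero, ENNReal.ofReal_zero]
          exact le_trans hconj0 (zero_le)
        · set r : ℝ := ((n : ℝ) / (n + 1)) * u t with hrdef
          set w := ENNReal.ofReal r with hwdef
          set U := ENNReal.ofReal (u t) with hUdef
          set d := ENNReal.ofReal (u t / (n + 1)) with hddef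
          have hr0 : 0 ≤ r := mul_nonneg (by positivity) (hpos t)
          have hrlt : r < u t := by
            rw [hrdef]
            calc ((n : ℝ) / (n + 1)) * u t < 1 * u t := by
                  refine mul_lt_mul_of_pos_right ?_ hu0
                  rw [div_lt_one (by positivity)]
                  linarith
              _ = u t := one_mul _
          have hwU : w < U := (ENNReal.ofReal_lt_ofReal_iff hu0).mpr hrlt
          have hUt : U ≠ ⊤ := ENNReal.ofReal_ne_top
          have hUd : U - w = d := by
            rw [hUdef, hwdef, ← ENNReal.ofReal_sub _ hr0, hddef]
            congr 1
            rw [hrdef]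
            field_simp
            ring
          have hwd : w = (n : ℝ≥0∞) * d := by
            rw [hwdef, hddef, show r = (n : ℝ) * (u t / (n + 1)) by rw [hrdef]; ring,
              ENNReal.ofReal_mul (by positivity), ENNReal.ofReal_natCast]
          calc P.conj t (leftDeriv (φ t) w)
              ≤ w * leftDeriv (φ t) w := conj_le_mul hconv htop w
            _ ≤ w * (φ t U / (U - w)) :=
                mul_le_mul' le_rfl (leftDeriv_le_div hconv htop hwU hUt)
            _ = (n : ℝ≥0∞) * (d * (φ t U / d)) := by rw [hUd, hwd, mul_assoc]
            _ ≤ (n : ℝ≥0∞) * φ t U := by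
                exact mul_le_mul' le_rfl ENNReal.mul_div_le
            _ ≤ (n : ℝ≥0∞) * n := by
                refine mul_le_mul' le_rfl ?_
                rw [← hheq t ht]
                exact hBt.1.2
      · rw [Set.indicator_of_notMem hBt]
        simp only [hundef, if_neg hBt, if_neg ht, ENNReal.ofReal_zero]
        exact hconj0
    calc (∫⁻ t, P.conj t (leftDeriv (φ t) (ENNReal.ofReal (un n t))) ∂μ)
        ≤ ∫⁻ t, (B n).indicator (fun _ => ((n : ℝ≥0∞) * n)) t ∂μ :=
          lintegral_mono_ae hbound
      _ = (n : ℝ≥0∞) * n * μ (B n) := lintegral_indicator_const (hBmeas n) _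
      _ < ⊤ := by
          have hμB : μ (B n) < ⊤ :=
            lt_of_le_of_lt (measure_mono (fun t ht => ht.1.1))
              (measure_spanningSets_lt_top μ n)
          exact ENNReal.mul_lt_top
            (ENNReal.mul_lt_top (ENNReal.natCast_lt_top n) (ENNReal.natCast_lt_top n)) hμB
end
end

section
/- Let Φ be a Musielak–Orlicz function and (Φ_n) a non-decreasing sequence of finite-valued Musielak–Orlicz functions converging upward to Φ. If a measurable function u belongs to L^{Φ_n} for every n and the sequence of Luxemburg norms ‖u‖_{Φ_n} is bounded, then u ∈ L^Φ and ‖u‖_{Φ_n} ↑ ‖u‖_Φ. -/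
open MeasureTheory ENNReal NNReal Filter Topology

noncomputable section

open MOFunction

variable {T : Type*} [MeasurableSpace T] {μ : Measure T}

/-- Auxiliary: a Musielak--Orlicz function is a.e. monotone in its second argument. -/
lemma MO_ae_mono (R : MOFunction T μ) : ∀ᵐ t ∂μ, Monotone (R.toFun t) := by
  filter_upwards [R.convex', R.zero', R.top'] with t hc h0 htop
  intro x y hxy
  rcases eq_or_ne y ⊤ with rfl | hy
  · simp [htop]
  rcases eq_or_ne y 0 with rfl | hy0
  · obtain rfl : x = 0 := le_antisymm hxy zero_le
    exact le_rfl
  · have hx : x ≠ ⊤ := fun h => hy (top_le_iff.mp (h ▸ hxy))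
    set p : ℝ≥0 := (x / y).toNNReal with hp
    have hdivne : x / y ≠ ⊤ := by
      simp [ENNReal.div_eq_top, hx, hy0]
    have hcoe : (p : ℝ≥0∞) = x / y := ENNReal.coe_toNNReal hdivne
    have hdiv1 : x / y ≤ 1 := by
      calc x / y ≤ y / y := ENNReal.div_le_div_right hxy y
      _ ≤ 1 := ENNReal.div_self_le_one
    have hp1 : p ≤ 1 := by
      rw [← ENNReal.coe_le_one_iff, hcoe]; exact hdiv1
    have key := hc y 0 p hp1
    simp only [smul_zero, add_zero, h0] at key
    have harg : p • y = x := by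
      rw [ENNReal.smul_def, smul_eq_mul, hcoe, ENNReal.div_mul_cancel hy0 hy]
    rw [harg] at key
    calc R.toFun t x ≤ p • R.toFun t y := key
    _ ≤ R.toFun t y := by
        rw [ENNReal.smul_def, smul_eq_mul]
        exact mul_le_of_le_one_left zero_le (ENNReal.coe_le_one_iff.mpr hp1)

/-- Auxiliary: a.e. scaling inequality `Φ(t, p x) ≤ p Φ(t, x)` for `p ≤ 1`. -/
lemma MO_ae_scale (R : MOFunction T μ) :
    ∀ᵐ t ∂μ, ∀ (x : ℝ≥0∞) (p : ℝ≥0), p ≤ 1 →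
      R.toFun t ((p : ℝ≥0∞) * x) ≤ (p : ℝ≥0∞) * R.toFun t x := by
  filter_upwards [R.convex', R.zero'] with t hc h0 x p hp
  have key := hc x 0 p hp
  simp only [smul_zero, add_zero, h0, ENNReal.smul_def, smul_eq_mul] at key
  exact key

/-- Auxiliary: a monotone lower semicontinuous function vanishing at `0` is the
supremum of its values at rational points below. -/
lemma mono_lsc_repr (φ : ℝ≥0∞ → ℝ≥0∞) (hm : Monotone φ)
    (hl : LowerSemicontinuous φ) (h0 : φ 0 = 0) (x : ℝ≥0∞) :
    φ x = ⨆ q : ℚ, if ENNReal.ofReal q < x then φ (ENNReal.ofReal q) else 0 := by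
  refine le_antisymm ?_ (iSup_le fun q => ?_)
  · rcases eq_or_ne x 0 with rfl | hx
    · simp [h0]
    · refine le_of_forall_lt fun c hc => ?_
      have hx0 : (0 : ℝ≥0∞) < x := pos_iff_ne_zero.mpr hx
      have hne : (𝓝[<] x).NeBot := nhdsWithin_Iio_self_neBot' ⟨0, hx0⟩
      have hev : ∀ᶠ y in 𝓝[<] x, c < φ y := nhdsWithin_le_nhds (hl x c hc)
      obtain ⟨y, hy, hyx⟩ := (hev.and eventually_mem_nhdsWithin).exists
      obtain ⟨q, hq0, hyq, hqx⟩ := ENNReal.lt_iff_exists_rat_btwn.mp hyx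
      have hofReal : (Real.toNNReal (q : ℝ) : ℝ≥0∞) = ENNReal.ofReal (q : ℝ) := rfl
      calc c < φ y := hy
      _ ≤ φ (ENNReal.ofReal q) := hm (le_of_lt (hofReal ▸ hyq))
      _ ≤ _ := by
          refine le_trans ?_ (le_iSup _ q)
          rw [if_pos (hofReal ▸ hqx)]
  · split_ifs with h
    · exact hm h.le
    · exact zero_le

/-- Auxiliary: a.e.-measurability of the integrand of the modular. -/
lemma MO_aemeas (R : MOFunction T μ) {v : T → ℝ≥0∞} (hv : Measurable v) :
    AEMeasurable (fun t => R.toFun t (v t)) μ := by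
  refine ⟨fun t => ⨆ q : ℚ, if ENNReal.ofReal q < v t then R.toFun t (ENNReal.ofReal q) else 0,
    ?_, ?_⟩
  · exact Measurable.iSup fun q => Measurable.ite
      (measurableSet_lt measurable_const hv) (R.measurable' _) measurable_const
  · filter_upwards [MO_ae_mono R, R.lsc', R.zero'] with t hm hl h0
    exact mono_lsc_repr _ hm hl h0 (v t)

/-- convergence of Luxemburg norms along an increasing sequence of
finite-valued Musielak--Orlicz functions. -/
theorem stmt2 [SigmaFinite μ] (hna : IsNonatomic μ) (P : MOFunction T μ)
    (Q : ℕ → MOFunction T μ)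
    (hfin : ∀ n, ∀ᵐ t ∂μ, ∀ x : ℝ≥0∞, x ≠ ⊤ → (Q n).toFun t x < ⊤)
    (hconv : ∀ᵐ t ∂μ, ∀ x : ℝ≥0∞,
      (∀ n, (Q n).toFun t x ≤ (Q (n + 1)).toFun t x) ∧
      (⨆ n, (Q n).toFun t x) = P.toFun t x)
    (u : T → ℝ) (hu : Measurable u) (hmem : ∀ n, (Q n).memLPhi u)
    (hb : ∃ C : ℝ, ∀ n, (Q n).luxNorm u ≤ C) :
    P.memLPhi u ∧ Monotone (fun n => (Q n).luxNorm u) ∧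
      Tendsto (fun n => (Q n).luxNorm u) atTop (nhds (P.luxNorm u)) := by
  classical
  set S : ℕ → Set ℝ := fun n => {l | 0 < l ∧ (Q n).modular (fun t => u t / l) ≤ 1} with hSdef
  set SP : Set ℝ := {l | 0 < l ∧ P.modular (fun t => u t / l) ≤ 1} with hSPdef
  have hNdef : ∀ n, (Q n).luxNorm u = sInf (S n) := fun n => rfl
  have hLdef : P.luxNorm u = sInf SP := rfl
  have hbdd : ∀ n, BddBelow (S n) := fun n => ⟨0, fun x hx => hx.1.le⟩
  have hSPbdd : BddBelow SP := ⟨0, fun x hx => hx.1.le⟩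
  -- modular is monotone in `n` and bounded by the modular of `P`
  have hmodmono : ∀ (w : T → ℝ) (n m : ℕ), n ≤ m →
      (Q n).modular w ≤ (Q m).modular w := by
    intro w n m hnm
    refine lintegral_mono_ae ?_
    filter_upwards [hconv] with t ht
    exact monotone_nat_of_le_succ
      (fun k => (ht (ENNReal.ofReal |w t|)).1 k) hnm
  have hmodle : ∀ (w : T → ℝ) (n : ℕ), (Q n).modular w ≤ P.modular w := by
    intro w n
    refine lintegral_mono_ae ?_
    filter_upwards [hconv] with t ht
    calc (Q n).toFun t (ENNReal.ofReal |w t|)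
        ≤ ⨆ k, (Q k).toFun t (ENNReal.ofReal |w t|) :=
          le_iSup (fun k => (Q k).toFun t (ENNReal.ofReal |w t|)) n
    _ = P.toFun t (ENNReal.ofReal |w t|) := (ht _).2
  -- monotone convergence for the modulars
  have hMCT : ∀ w : T → ℝ, Measurable w →
      P.modular w = ⨆ n, (Q n).modular w := by
    intro w hw
    have hv : Measurable fun t => ENNReal.ofReal |w t| :=
      ENNReal.measurable_ofReal.comp hw.abs
    have hmono : ∀ᵐ t ∂μ, Monotone fun n => (Q n).toFun t (ENNReal.ofReal |w t|) := by
      filter_upwards [hconv] with t ht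
      exact monotone_nat_of_le_succ fun k => (ht _).1 k
    simp only [MOFunction.modular]
    rw [← lintegral_iSup' (fun n => MO_aemeas (Q n) hv) hmono]
    refine lintegral_congr_ae ?_
    filter_upwards [hconv] with t ht
    exact ((ht _).2).symm
  -- scaling: larger denominators keep the modular below 1
  have hscaleS : ∀ (R : MOFunction T μ) {l r : ℝ}, 0 < l → l ≤ r →
      R.modular (fun t => u t / l) ≤ 1 → R.modular (fun t => u t / r) ≤ 1 := by
    intro R l r hl hlr hle
    refine le_trans (le_trans ?_ le_rfl) hle
    refine lintegral_mono_ae ?_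
    filter_upwards [MO_ae_mono R] with t hm
    apply hm
    apply ENNReal.ofReal_le_ofReal
    have hr : 0 < r := lt_of_lt_of_le hl hlr
    rw [abs_div, abs_div, abs_of_pos hl, abs_of_pos hr]
    gcongr
  -- each `S n` is nonempty
  have hSne : ∀ n, (S n).Nonempty := by
    intro n
    obtain ⟨-, l, hl, hfin'⟩ := hmem n
    set I := (Q n).modular (fun t => l * u t) with hI
    have hItop : I ≠ ⊤ := hfin'.ne
    have hI1 : I + 1 ≠ ⊤ := by simp [hItop]
    have hinvne : (I + 1)⁻¹ ≠ ⊤ := ENNReal.inv_ne_top.mpr (by simp)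
    set s : ℝ := ((I + 1)⁻¹).toReal with hs
    have hspos : 0 < s :=
      ENNReal.toReal_pos (ENNReal.inv_ne_zero.mpr hI1) hinvne
    have hsofReal : ENNReal.ofReal s = (I + 1)⁻¹ := ENNReal.ofReal_toReal hinvne
    have hp1 : s.toNNReal ≤ 1 := by
      have h1 : (I + 1)⁻¹ ≤ 1 := ENNReal.inv_le_one.mpr le_add_self
      have : s ≤ 1 := by
        rw [hs]
        simpa using ENNReal.toReal_mono (by simp) h1
      simpa using Real.toNNReal_mono this
    have key : (Q n).modular (fun t => s * (l * u t)) ≤ ENNReal.ofReal s * I := by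
      simp only [MOFunction.modular, hI]
      calc ∫⁻ t, (Q n).toFun t (ENNReal.ofReal |s * (l * u t)|) ∂μ
          = ∫⁻ t, (Q n).toFun t ((s.toNNReal : ℝ≥0∞) * ENNReal.ofReal |l * u t|) ∂μ := by
            refine lintegral_congr fun t => ?_
            rw [abs_mul, abs_of_pos hspos, ENNReal.ofReal_mul hspos.le]
            rfl
        _ ≤ ∫⁻ t, (s.toNNReal : ℝ≥0∞) * (Q n).toFun t (ENNReal.ofReal |l * u t|) ∂μ := by
            refine lintegral_mono_ae ?_
            filter_upwards [MO_ae_scale (Q n)] with t hsc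
            exact hsc _ _ hp1
        _ = (s.toNNReal : ℝ≥0∞) * ∫⁻ t, (Q n).toFun t (ENNReal.ofReal |l * u t|) ∂μ :=
            lintegral_const_mul' _ _ coe_ne_top
        _ = ENNReal.ofReal s * I := rfl
    have hbound : ENNReal.ofReal s * I ≤ 1 := by
      rw [hsofReal]
      calc (I + 1)⁻¹ * I ≤ (I + 1)⁻¹ * (I + 1) := by
            exact mul_le_mul_right le_self_add _
      _ = 1 := ENNReal.inv_mul_cancel (by simp) hI1
    refine ⟨(s * l)⁻¹, inv_pos.mpr (mul_pos hspos hl), ?_⟩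
    have heq : (fun t => u t / (s * l)⁻¹) = fun t => s * (l * u t) := by
      funext t; rw [div_eq_mul_inv, inv_inv]; ring
    rw [heq]
    exact le_trans key hbound
  -- key: any `r` larger than all the `sInf (S n)` belongs to `SP`
  have hkey : ∀ r : ℝ, 0 < r → (∀ n, sInf (S n) < r) → r ∈ SP := by
    intro r hr hlt
    have hQr : ∀ n, (Q n).modular (fun t => u t / r) ≤ 1 := by
      intro n
      obtain ⟨l, hlmem, hlr⟩ := exists_lt_of_csInf_lt (hSne n) (hlt n)
      exact hscaleS (Q n) hlmem.1 hlr.le hlmem.2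
    refine ⟨hr, ?_⟩
    rw [hMCT _ (hu.div_const r)]
    exact iSup_le hQr
  obtain ⟨C, hC⟩ := hb
  have hNnonneg : ∀ n, 0 ≤ (Q n).luxNorm u := fun n =>
    Real.sInf_nonneg fun x hx => hx.1.le
  set C' : ℝ := max C 0 + 1 with hC'def
  have hC'pos : 0 < C' := by positivity
  have hC'mem : C' ∈ SP := by
    refine hkey C' hC'pos fun n => ?_
    have := le_trans (hC n) (le_max_left C 0)
    rw [hNdef n] at this
    linarith
  have hmemP : P.memLPhi u := by
    refine ⟨hu, C'⁻¹, inv_pos.mpr hC'pos, ?_⟩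
    have heq : (fun t => C'⁻¹ * u t) = fun t => u t / C' := by
      funext t; rw [div_eq_inv_mul]
    rw [heq]
    exact lt_of_le_of_lt hC'mem.2 one_lt_top
  have hNmono : Monotone fun n => (Q n).luxNorm u := by
    intro n m hnm
    simp only [hNdef]
    exact csInf_le_csInf (hbdd n) (hSne m)
      (fun l hl => ⟨hl.1, le_trans (hmodmono _ n m hnm) hl.2⟩)
  have hNleL : ∀ n, (Q n).luxNorm u ≤ P.luxNorm u := by
    intro n
    rw [hNdef n, hLdef]
    exact csInf_le_csInf (hbdd n) ⟨C', hC'mem⟩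
      (fun l hl => ⟨hl.1, le_trans (hmodle _ n) hl.2⟩)
  have hbddA : BddAbove (Set.range fun n => (Q n).luxNorm u) :=
    ⟨P.luxNorm u, by rintro _ ⟨n, rfl⟩; exact hNleL n⟩
  set Ssup : ℝ := ⨆ n, (Q n).luxNorm u with hSsup
  have htend : Tendsto (fun n => (Q n).luxNorm u) atTop (𝓝 Ssup) :=
    tendsto_atTop_ciSup hNmono hbddA
  have hle1 : Ssup ≤ P.luxNorm u := ciSup_le hNleL
  have hS0 : 0 ≤ Ssup := le_trans (hNnonneg 0) (le_ciSup hbddA 0)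
  have hge : P.luxNorm u ≤ Ssup := by
    by_contra hcon
    push_neg at hcon
    set ε : ℝ := (P.luxNorm u - Ssup) / 2 with hε
    have hεpos : 0 < ε := by simp only [hε]; linarith
    have hmemSP : Ssup + ε ∈ SP := by
      refine hkey _ (by linarith) fun n => ?_
      have h2 : (Q n).luxNorm u ≤ Ssup := le_ciSup hbddA n
      rw [← hNdef n]
      linarith
    have := csInf_le hSPbdd hmemSP
    rw [← hLdef] at this
    simp only [hε] at this
    linarith
  have hfinal : Ssup = P.luxNorm u := le_antisymm hle1 hge
  exact ⟨hmemP, hNmono, hfinal ▸ htend⟩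
end
end

section
/- If u ∈ L^Φ satisfies I_Φ(u) = ∞, then there exists a sequence of measurable functions (u_n) with |u| ≥ u_n ↓ 0 pointwise and I_Φ(u_n) = ∞ for all n ≥ 1. -/
open MeasureTheory ENNReal NNReal Filter Topology

noncomputable section

open MOFunction

variable {T : Type*} [MeasurableSpace T] {μ : Measure T}

/-- if `I_Φ(u) = ∞` then there is a sequence `|u| ≥ u_n ↓ 0` with
`I_Φ(u_n) = ∞` for every `n`. -/
theorem stmt6 [SigmaFinite μ] (hna : IsNonatomic μ) (P : MOFunction T μ)
    (u : T → ℝ) (hu : P.memLPhi u) (h : P.modular u = ⊤) :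
    ∃ un : ℕ → T → ℝ, (∀ n, Measurable (un n)) ∧
      (∀ n t, 0 ≤ un n t ∧ un n t ≤ |u t|) ∧
      (∀ n t, un (n + 1) t ≤ un n t) ∧
      (∀ t, Tendsto (fun n => un n t) atTop (nhds 0)) ∧
      ∀ n, P.modular (un n) = ⊤ := by
  classical
  obtain ⟨hmeas_u, -⟩ := hu
  -- a measurable version of `t ↦ Φ(t, |u t|)`
  set G : T → ℝ≥0∞ := fun t =>
    ⨆ q : ℚ, if 0 ≤ (q : ℝ) ∧ (q : ℝ) < |u t| then P.toFun t (ENNReal.ofReal (q : ℝ)) else 0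
    with hGdef
  have hGmeas : Measurable G := by
    apply Measurable.iSup
    intro q
    apply Measurable.ite _ (P.measurable' _) measurable_const
    rw [Set.setOf_and]
    exact (MeasurableSet.const _).inter (measurableSet_lt measurable_const hmeas_u.abs)
  -- a.e. monotonicity of Φ(t, ·)
  have hmono : ∀ᵐ t ∂μ, Monotone (P.toFun t) := by
    filter_upwards [P.convex', P.zero', P.top'] with t hconv hzero htop
    intro x y hxy
    rcases eq_or_ne y ⊤ with rfl | hytop
    · rw [htop]; exact le_top
    rcases eq_or_ne y 0 with rfl | hy0
    · obtain rfl : x = 0 := le_antisymm hxy zero_le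
      exact le_rfl
    have hdivle : x / y ≤ 1 := by
      rw [← ENNReal.div_self hy0 hytop]
      exact ENNReal.div_le_div_right hxy y
    set p : ℝ≥0 := (x / y).toNNReal with hpdef
    have hpc : (p : ℝ≥0∞) = x / y :=
      ENNReal.coe_toNNReal (hdivle.trans_lt (by norm_num)).ne
    have hp1 : p ≤ 1 := by
      rw [← ENNReal.coe_le_one_iff, hpc]; exact hdivle
    have hx : (p : ℝ≥0∞) * y = x := by
      rw [hpc]; exact ENNReal.div_mul_cancel hy0 hytop
    have key := hconv y 0 p hp1
    rw [hzero, smul_zero, add_zero, add_zero] at key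
    simp only [ENNReal.smul_def, smul_eq_mul] at key
    rw [hx] at key
    refine key.trans ?_
    calc (p : ℝ≥0∞) * P.toFun t y ≤ 1 * P.toFun t y :=
          mul_le_mul_left (by exact_mod_cast hp1) _
      _ = P.toFun t y := one_mul _
  -- a.e. equality of `G` with the integrand
  have hGeq : ∀ᵐ t ∂μ, P.toFun t (ENNReal.ofReal |u t|) = G t := by
    filter_upwards [hmono, P.lsc', P.zero'] with t hm hl hz
    rcases le_or_gt |u t| 0 with h0 | h0
    · have habs : |u t| = 0 := le_antisymm h0 (abs_nonneg _)
      rw [habs, ENNReal.ofReal_zero, hz]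
      symm
      simp only [hGdef]
      rw [ENNReal.iSup_eq_zero]
      intro q
      rw [if_neg]
      rintro ⟨hq0, hq⟩
      rw [habs] at hq; linarith
    · set x := ENNReal.ofReal |u t| with hxdef
      have hx0 : x ≠ 0 := by
        simp only [hxdef, ne_eq, ENNReal.ofReal_eq_zero, not_le]; linarith
      have hxtop : x ≠ ⊤ := ENNReal.ofReal_ne_top
      apply le_antisymm
      · -- Φ t x ≤ G t via lower semicontinuity
        refine le_of_forall_lt fun c hc => ?_
        have hev := hl x c hc
        haveI : (𝓝[<] x).NeBot :=
          nhdsWithin_Iio_self_neBot' ⟨0, pos_iff_ne_zero.mpr hx0⟩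
        obtain ⟨y, hcy, hyx⟩ :=
          ((hev.filter_mono (nhdsWithin_le_nhds (s := Set.Iio x))).and
            (eventually_mem_nhdsWithin (a := x) (s := Set.Iio x))).exists
        have hyx' : y < x := hyx
        have hytop : y ≠ ⊤ := (hyx'.trans (lt_top_iff_ne_top.mpr hxtop)).ne
        have hyr : y.toReal < |u t| := by
          have := (ENNReal.toReal_lt_toReal hytop hxtop).mpr hyx'
          rwa [hxdef, ENNReal.toReal_ofReal (abs_nonneg _)] at this
        obtain ⟨q, hq1, hq2⟩ := exists_rat_btwn hyr
        have hq0 : 0 ≤ (q : ℝ) := le_of_lt (lt_of_le_of_lt ENNReal.toReal_nonneg hq1)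
        have hyq : y ≤ ENNReal.ofReal (q : ℝ) := by
          conv_lhs => rw [← ENNReal.ofReal_toReal hytop]
          exact ENNReal.ofReal_le_ofReal hq1.le
        have hle : P.toFun t (ENNReal.ofReal (q : ℝ)) ≤ G t := by
          have hsup := le_iSup (fun q : ℚ =>
            if 0 ≤ (q : ℝ) ∧ (q : ℝ) < |u t| then P.toFun t (ENNReal.ofReal (q : ℝ)) else 0) q
          rwa [if_pos ⟨hq0, hq2⟩] at hsup
        exact lt_of_lt_of_le (lt_of_lt_of_le hcy (hm hyq)) hle
      · -- G t ≤ Φ t x by monotonicity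
        refine iSup_le fun q => ?_
        split_ifs with hq
        · exact hm (ENNReal.ofReal_le_ofReal hq.2.le)
        · exact zero_le
  have hGint : ∫⁻ t, G t ∂μ = ⊤ := by
    rw [← lintegral_congr_ae hGeq]
    exact h
  -- it suffices to find suitable decreasing sets with empty intersection
  suffices hE : ∃ E : ℕ → Set T, (∀ n, MeasurableSet (E n)) ∧ (∀ n, E (n + 1) ⊆ E n) ∧
      (⋂ n, E n) = ∅ ∧ ∀ n, ∫⁻ t in E n, G t ∂μ = ⊤ by
    obtain ⟨E, hEm, hEd, hEi, hEint⟩ := hE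
    have hanti : Antitone E := antitone_nat_of_succ_le fun n => hEd n
    refine ⟨fun n => (E n).indicator fun t => |u t|, ?_, ?_, ?_, ?_, ?_⟩
    · intro n
      exact (hmeas_u.abs).indicator (hEm n)
    · intro n t
      by_cases ht : t ∈ E n
      · simp [Set.indicator_of_mem ht, abs_nonneg]
      · simp [Set.indicator_of_notMem ht, abs_nonneg]
    · intro n t
      dsimp only
      by_cases ht : t ∈ E (n + 1)
      · rw [Set.indicator_of_mem ht, Set.indicator_of_mem (hEd n ht)]
      · rw [Set.indicator_of_notMem ht]
        by_cases h2 : t ∈ E n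
        · simp [Set.indicator_of_mem h2, abs_nonneg]
        · simp [Set.indicator_of_notMem h2]
    · intro t
      have hex : ∃ N, t ∉ E N := by
        by_contra hc
        push_neg at hc
        have : t ∈ ⋂ n, E n := Set.mem_iInter.mpr hc
        rw [hEi] at this
        exact this
      obtain ⟨N, hN⟩ := hex
      apply Filter.Tendsto.congr' _ (tendsto_const_nhds (x := (0 : ℝ)))
      filter_upwards [eventually_ge_atTop N] with n hn
      have hnot : t ∉ E n := fun ht => hN (hanti hn ht)
      exact (Set.indicator_of_notMem hnot _).symm
    · intro n
      have hmod : P.modular ((E n).indicator fun t => |u t|) = ∫⁻ t in E n, G t ∂μ := by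
        rw [MOFunction.modular, ← lintegral_indicator (hEm n) G]
        apply lintegral_congr_ae
        filter_upwards [hGeq, P.zero'] with t htG hz
        by_cases ht : t ∈ E n
        · rw [Set.indicator_of_mem ht, Set.indicator_of_mem ht, abs_abs, htG]
        · rw [Set.indicator_of_notMem ht, Set.indicator_of_notMem ht, abs_zero,
            ENNReal.ofReal_zero, hz]
      rw [hmod, hEint n]
  -- construct the sets
  set Z : Set T := G ⁻¹' {⊤} with hZdef
  have hZm : MeasurableSet Z := hGmeas (measurableSet_singleton ⊤)
  by_cases hZ : μ Z = 0
  · -- case A : the integrand is a.e. finite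
    refine ⟨fun n => {t | G t < ⊤} ∩ ({t | (n : ℝ≥0∞) < G t} ∪ (spanningSets μ n)ᶜ),
      fun n => ?_, fun n => ?_, ?_, fun n => ?_⟩
    · exact (hGmeas measurableSet_Iio).inter
        ((hGmeas measurableSet_Ioi).union (measurableSet_spanningSets μ n).compl)
    · refine Set.inter_subset_inter_right _ (Set.union_subset_union ?_ ?_)
      · intro t ht
        have hle : ((n : ℕ) : ℝ≥0∞) ≤ ((n + 1 : ℕ) : ℝ≥0∞) := by exact_mod_cast Nat.le_succ n
        exact lt_of_le_of_lt hle ht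
      · exact Set.compl_subset_compl.mpr (spanningSets_mono (μ := μ) (Nat.le_succ n))
    · ext t
      simp only [Set.mem_iInter, Set.mem_empty_iff_false, iff_false, not_forall]
      by_contra hc
      push_neg at hc
      have h0 := hc 0
      have hfin : G t < ⊤ := h0.1
      obtain ⟨k, hk⟩ := ENNReal.exists_nat_gt hfin.ne
      obtain ⟨N, hNmem⟩ : ∃ N, t ∈ spanningSets μ N := by
        have ht : t ∈ ⋃ i, spanningSets μ i := by
          rw [iUnion_spanningSets]; exact Set.mem_univ t
        exact Set.mem_iUnion.mp ht
      have hn := (hc (max k N)).2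
      rcases hn with hn | hn
      · have : ((max k N : ℕ) : ℝ≥0∞) < (k : ℕ) := lt_of_lt_of_le hn hk.le
        have : (max k N : ℕ) < k := by exact_mod_cast this
        exact absurd this (not_lt.mpr (le_max_left k N))
      · exact hn (spanningSets_mono (μ := μ) (le_max_right k N) hNmem)
    · -- the integral over each set is infinite
      set A : Set T := {t | G t < ⊤} ∩ ({t | (n : ℝ≥0∞) < G t} ∪ (spanningSets μ n)ᶜ) with hAdef
      have hAm : MeasurableSet A := (hGmeas measurableSet_Iio).inter
        ((hGmeas measurableSet_Ioi).union (measurableSet_spanningSets μ n).compl)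
      have hsplit := lintegral_add_compl G hAm (μ := μ)
      have hsub : Aᶜ ⊆ Z ∪ ({t | G t ≤ (n : ℝ≥0∞)} ∩ spanningSets μ n) := by
        intro t ht
        simp only [hAdef, Set.mem_compl_iff, Set.mem_inter_iff, Set.mem_setOf_eq,
          Set.mem_union, not_and_or, not_or, not_lt, Set.not_notMem] at ht
        rcases ht with ht | ht
        · left
          simpa [hZdef] using top_le_iff.mp ht
        · right
          exact ⟨ht.1, ht.2⟩
      have hfin : ∫⁻ t in Aᶜ, G t ∂μ ≠ ⊤ := by
        have h1 : ∫⁻ t in Aᶜ, G t ∂μ ≤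
            ∫⁻ t in Z ∪ ({t | G t ≤ (n : ℝ≥0∞)} ∩ spanningSets μ n), G t ∂μ :=
          lintegral_mono_set hsub
        have h2 : ∫⁻ t in Z ∪ ({t | G t ≤ (n : ℝ≥0∞)} ∩ spanningSets μ n), G t ∂μ ≤
            ∫⁻ t in Z, G t ∂μ + ∫⁻ t in {t | G t ≤ (n : ℝ≥0∞)} ∩ spanningSets μ n, G t ∂μ :=
          lintegral_union_le _ _ _
        have h3 : ∫⁻ t in Z, G t ∂μ = 0 := setLIntegral_measure_zero _ _ hZ
        have h4 : ∫⁻ t in {t | G t ≤ (n : ℝ≥0∞)} ∩ spanningSets μ n, G t ∂μ ≤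
            (n : ℝ≥0∞) * μ ({t | G t ≤ (n : ℝ≥0∞)} ∩ spanningSets μ n) := by
          have := setLIntegral_mono (μ := μ)
            (s := {t | G t ≤ (n : ℝ≥0∞)} ∩ spanningSets μ n)
            (f := G) (g := fun _ => (n : ℝ≥0∞)) measurable_const
            (fun x hx => hx.1)
          rwa [setLIntegral_const] at this
        have h5 : (n : ℝ≥0∞) * μ ({t | G t ≤ (n : ℝ≥0∞)} ∩ spanningSets μ n) < ⊤ := by
          refine ENNReal.mul_lt_top (by simp) ?_
          exact lt_of_le_of_lt (measure_mono Set.inter_subset_right)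
            (measure_spanningSets_lt_top μ n)
        refine ne_of_lt (lt_of_le_of_lt (h1.trans h2) ?_)
        rw [h3, zero_add]
        exact lt_of_le_of_lt h4 h5
      by_contra hne
      rw [hGint] at hsplit
      exact (ENNReal.add_ne_top.mpr ⟨hne, hfin⟩) hsplit
  · -- case B : `G = ∞` on a set of positive measure; use non-atomicity
    have hmex : ∃ m, 0 < μ (Z ∩ spanningSets μ m) := by
      by_contra hc
      push_neg at hc
      apply hZ
      have hsub : Z ⊆ ⋃ m, Z ∩ spanningSets μ m := by
        rw [← Set.inter_iUnion, iUnion_spanningSets, Set.inter_univ]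
      refine le_antisymm ?_ zero_le
      calc μ Z ≤ ∑' m, μ (Z ∩ spanningSets μ m) :=
            (measure_mono hsub).trans (measure_iUnion_le _)
        _ = 0 := by
            simp only [fun m => le_antisymm (hc m) zero_le, tsum_zero]
    obtain ⟨m, hm⟩ := hmex
    set Good : Set T → Prop :=
      fun s => s ⊆ Z ∧ MeasurableSet s ∧ 0 < μ s ∧ μ s < ⊤ with hGood
    have step : ∀ s, Good s → ∃ p, p ⊆ s ∧ MeasurableSet p ∧ 0 < μ p ∧ Good (s \ p) := by
      rintro s ⟨hsZ, hsm, hs0, hsT⟩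
      obtain ⟨p, hps, hpm, hp0, hpl⟩ := hna s hsm hs0
      refine ⟨p, hps, hpm, hp0, Set.diff_subset.trans hsZ, hsm.diff hpm, ?_,
        lt_of_le_of_lt (measure_mono Set.diff_subset) hsT⟩
      rw [measure_diff hps hpm.nullMeasurableSet (hpl.trans hsT).ne]
      exact tsub_pos_iff_lt.mpr hpl
    have hgood0 : Good (Z ∩ spanningSets μ m) :=
      ⟨Set.inter_subset_left, hZm.inter (measurableSet_spanningSets μ m), hm,
        lt_of_le_of_lt (measure_mono Set.inter_subset_right) (measure_spanningSets_lt_top μ m)⟩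
    let R : ℕ → {s : Set T // Good s} := fun n =>
      Nat.rec ⟨Z ∩ spanningSets μ m, hgood0⟩
        (fun _ prev => ⟨prev.1 \ Classical.choose (step prev.1 prev.2),
          (Classical.choose_spec (step prev.1 prev.2)).2.2.2⟩) n
    set Pk : ℕ → Set T := fun n => Classical.choose (step (R n).1 (R n).2) with hPkdef
    have hPsub : ∀ n, Pk n ⊆ (R n).1 := fun n =>
      (Classical.choose_spec (step (R n).1 (R n).2)).1
    have hPm : ∀ n, MeasurableSet (Pk n) := fun n =>
      (Classical.choose_spec (step (R n).1 (R n).2)).2.1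
    have hP0 : ∀ n, 0 < μ (Pk n) := fun n =>
      (Classical.choose_spec (step (R n).1 (R n).2)).2.2.1
    have hRsucc : ∀ n, (R (n + 1)).1 = (R n).1 \ Pk n := fun n => rfl
    have hRanti : Antitone fun n => (R n).1 := by
      apply antitone_nat_of_succ_le
      intro n
      rw [hRsucc n]
      exact Set.diff_subset
    have hRZ : ∀ n, (R n).1 ⊆ Z := fun n => (R n).2.1
    have hPdisj : ∀ k j, k < j → ∀ t, t ∈ Pk j → t ∉ Pk k := by
      intro k j hkj t htj htk
      have h1 : t ∈ (R (k + 1)).1 := hRanti hkj (hPsub j htj)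
      rw [hRsucc k] at h1
      exact h1.2 htk
    refine ⟨fun n => ⋃ k, ⋃ (_ : n ≤ k), Pk k, fun n => ?_, fun n => ?_, ?_, fun n => ?_⟩
    · exact MeasurableSet.iUnion fun k => MeasurableSet.iUnion fun _ => hPm k
    · intro t ht
      obtain ⟨k, hk, htk⟩ := Set.mem_iUnion₂.mp ht
      exact Set.mem_iUnion₂.mpr ⟨k, (Nat.le_succ n).trans hk, htk⟩
    · ext t
      simp only [Set.mem_iInter, Set.mem_empty_iff_false, iff_false, not_forall]
      by_contra hc
      push_neg at hc
      obtain ⟨k0, _, htk0⟩ := Set.mem_iUnion₂.mp (hc 0)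
      obtain ⟨k, hk, htk⟩ := Set.mem_iUnion₂.mp (hc (k0 + 1))
      exact hPdisj k0 k hk t htk htk0
    · have hsub : Pk n ⊆ ⋃ k, ⋃ (_ : n ≤ k), Pk k :=
        fun t ht => Set.mem_iUnion₂.mpr ⟨n, le_rfl, ht⟩
      refine top_le_iff.mp ?_
      calc (⊤ : ℝ≥0∞) = ∫⁻ t in Pk n, G t ∂μ := by
            rw [setLIntegral_congr_fun (hPm n)
              ((fun t ht => show G t = ⊤ by
                have := hRZ n (hPsub n ht)
                simpa [hZdef] using this)),
              setLIntegral_const, ENNReal.top_mul (hP0 n).ne']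
        _ ≤ _ := lintegral_mono_set hsub
end
end

section
/- If u ∈ 𝐿̃^Φ satisfies I_Φ(λu) = ∞ for every λ > 1, then there exist non-increasing sequences of measurable sets (A_n) and (B_n), each converging to the empty set, with A_n ∩ B_n = ∅ and I_Φ(λ u χ_{A_n}) = I_Φ(λ u χ_{B_n}) = ∞ for every λ > 1 and every n ≥ 1. -/
open MeasureTheory ENNReal NNReal Filter Topology

noncomputable section

open MOFunction

variable {T : Type*} [MeasurableSpace T] {μ : Measure T}

lemma aux_tsum_eq_top (a : ℕ → ℝ≥0∞) (N : ℕ) (h : ∀ i, N ≤ i → 1 ≤ a i) :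
    ∑' i, a i = ⊤ := by
  by_contra hne
  have hx : ∀ n : ℕ, (n : ℝ≥0∞) ≤ ∑' i, a i := by
    intro n
    calc (n:ℝ≥0∞) = ∑ _i ∈ Finset.range n, 1 := by simp
    _ ≤ ∑ i ∈ Finset.range n, a (N + i) :=
        Finset.sum_le_sum (fun i _ => h _ (Nat.le_add_right _ _))
    _ = ∑ i ∈ (Finset.range n).map ⟨fun i => N + i, fun a b h => Nat.add_left_cancel h⟩, a i := by
        rw [Finset.sum_map]; rfl
    _ ≤ ∑' i, a i := ENNReal.sum_le_tsum _
  obtain ⟨n, hn⟩ := ENNReal.exists_nat_gt hne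
  exact absurd (hx n) (not_le.mpr hn)

lemma aux_monotone (f : ℝ≥0∞ → ℝ≥0∞)
    (hconv : ∀ a b : ℝ≥0∞, ∀ p : ℝ≥0, p ≤ 1 →
      f (p • a + (1 - p) • b) ≤ p • f a + (1 - p) • f b)
    (h0 : f 0 = 0) (htop : f ⊤ = ⊤) : Monotone f := by
  intro x y hxy
  rcases eq_or_ne y ⊤ with rfl | hy
  · rw [htop]; exact le_top
  rcases eq_or_ne x 0 with rfl | hx0
  · rw [h0]; exact zero_le
  have hy0 : y ≠ 0 := fun h => hx0 (le_antisymm (h ▸ hxy) (zero_le))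
  have hx : x ≠ ⊤ := fun h => hy (top_le_iff.mp (h ▸ hxy))
  set p : ℝ≥0 := x.toNNReal / y.toNNReal with hp
  have hyn0 : y.toNNReal ≠ 0 := by
    simp only [ne_eq, ENNReal.toNNReal_eq_zero_iff]
    tauto
  have hple : p ≤ 1 := by
    rw [hp, div_le_one (pos_iff_ne_zero.mpr hyn0)]
    exact (ENNReal.toNNReal_le_toNNReal hx hy).mpr hxy
  have hpy : (p:ℝ≥0∞) * y = x := by
    rw [hp, ENNReal.coe_div hyn0, ENNReal.coe_toNNReal hx, ENNReal.coe_toNNReal hy]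
    exact ENNReal.div_mul_cancel hy0 hy
  have hc := hconv y 0 p hple
  rw [smul_zero, add_zero, h0, smul_zero, add_zero] at hc
  have hxx : p • y = x := by rw [ENNReal.smul_def, smul_eq_mul, hpy]
  rw [hxx] at hc
  calc f x ≤ p • f y := hc
  _ = (p:ℝ≥0∞) * f y := by rw [ENNReal.smul_def, smul_eq_mul]
  _ ≤ 1 * f y := mul_le_mul_left (by exact_mod_cast hple) _
  _ = f y := one_mul _

lemma aux_sup_rat (f : ℝ≥0∞ → ℝ≥0∞) (hmono : Monotone f) (hlsc : LowerSemicontinuous f)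
    (h0 : f 0 = 0) (x : ℝ≥0∞) (hx : x ≠ ⊤) :
    (⨆ q : ℚ, if ENNReal.ofReal q < x then f (ENNReal.ofReal q) else 0) = f x := by
  apply le_antisymm
  · refine iSup_le fun q => ?_
    split_ifs with h
    · exact hmono h.le
    · exact zero_le
  · by_contra hlt
    push_neg at hlt
    rcases eq_or_ne x 0 with rfl | hx0
    · rw [h0] at hlt; exact absurd hlt (by simp)
    have : (nhdsWithin x (Set.Iio x)).NeBot :=
      nhdsWithin_Iio_self_neBot' ⟨0, pos_iff_ne_zero.mpr hx0⟩
    have hev : ∀ᶠ z in nhdsWithin x (Set.Iio x),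
        (⨆ q : ℚ, if ENNReal.ofReal q < x then f (ENNReal.ofReal q) else 0) < f z :=
      ((hlsc x _ hlt).filter_mono nhdsWithin_le_nhds)
    obtain ⟨z, hz, hzx⟩ := (hev.and eventually_mem_nhdsWithin).exists
    have hzt : z ≠ ⊤ := (hzx.trans_le le_top).ne
    obtain ⟨q, hq1, hq2⟩ := exists_rat_btwn ((ENNReal.toReal_lt_toReal hzt hx).mpr hzx)
    have hq0 : (0:ℝ) ≤ q := le_trans ENNReal.toReal_nonneg hq1.le
    have hzq : z < ENNReal.ofReal q := by
      rw [← ENNReal.ofReal_toReal hzt]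
      exact (ENNReal.ofReal_lt_ofReal_iff_of_nonneg ENNReal.toReal_nonneg).mpr hq1
    have hqx : ENNReal.ofReal q < x := by
      rw [← ENNReal.ofReal_toReal hx]
      exact (ENNReal.ofReal_lt_ofReal_iff_of_nonneg hq0).mpr hq2
    have hle : f (ENNReal.ofReal q) ≤
        ⨆ q : ℚ, if ENNReal.ofReal q < x then f (ENNReal.ofReal q) else 0 := by
      have := le_iSup (fun q : ℚ => if ENNReal.ofReal q < x then f (ENNReal.ofReal q) else 0) q
      rwa [if_pos hqx] at this
    exact absurd (hz.trans_le (hmono hzq.le) |>.trans_le hle) (lt_irrefl _)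

lemma aux_meas_version (P : MOFunction T μ) (v : T → ℝ≥0∞) (hv : Measurable v)
    (hvt : ∀ t, v t ≠ ⊤) :
    ∃ g : T → ℝ≥0∞, Measurable g ∧ g =ᵐ[μ] fun t => P.toFun t (v t) := by
  classical
  refine ⟨fun t => ⨆ q : ℚ, if ENNReal.ofReal q < v t then P.toFun t (ENNReal.ofReal q) else 0,
    ?_, ?_⟩
  · refine Measurable.iSup fun q => Measurable.ite ?_ (P.measurable' _) measurable_const
    exact hv measurableSet_Ioi
  · filter_upwards [P.convex', P.zero', P.top', P.lsc'] with t hconv h0 htop hlsc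
    exact aux_sup_rat _ (aux_monotone _ hconv h0 htop) hlsc h0 (v t) (hvt t)

lemma aux_step [SigmaFinite μ] (g : ℕ → T → ℝ≥0∞) (hgm : ∀ k, Measurable (g k))
    (hganti : ∀ t, Antitone fun k => g k t)
    (F : Set T) (hFm : MeasurableSet F) (hZ : μ (F ∩ ⋂ j, {t | g j t = ⊤}) = 0)
    (k : ℕ) (hF : ∀ j, k ≤ j → ∫⁻ t in F, g j t ∂μ = ⊤) :
    ∃ (G : Set T) (m m' : ℕ), G ⊆ F ∧ MeasurableSet G ∧ k ≤ m ∧ m < m' ∧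
      1 ≤ ∫⁻ t in G, g m t ∂μ ∧ ∀ j, m' ≤ j → ∫⁻ t in F \ G, g j t ∂μ = ⊤ := by
  have hrem : ∀ (G : Set T), G ⊆ F → MeasurableSet G → ∀ j, k ≤ j →
      (∫⁻ t in G, g j t ∂μ ≠ ⊤) → ∫⁻ t in F \ G, g j t ∂μ = ⊤ := by
    intro G hGF hGm j hj hfin
    have hsplit : ∫⁻ t in F, g j t ∂μ = ∫⁻ t in F \ G, g j t ∂μ + ∫⁻ t in G, g j t ∂μ := by
      rw [← lintegral_union hGm Set.disjoint_sdiff_left, Set.diff_union_of_subset hGF]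
    have h := hF j hj
    rw [hsplit] at h
    exact (ENNReal.add_eq_top.mp h).resolve_right hfin
  by_cases hY : ∃ j, k ≤ j ∧ 0 < μ (F ∩ {t | g j t = ⊤})
  · obtain ⟨j, hkj, hpos⟩ := hY
    set Y := F ∩ {t | g j t = ⊤} with hYdef
    have hcover : Y ⊆ (F ∩ ⋂ j', {t | g j' t = ⊤}) ∪
        ⋃ p : ℕ × ℕ × ℕ, (Y ∩ {t | g p.1 t ≤ (p.2.1 : ℝ≥0∞)} ∩ spanningSets μ p.2.2) := by
      intro t ht
      by_cases hall : ∀ j', g j' t = ⊤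
      · exact Or.inl ⟨ht.1, Set.mem_iInter.mpr fun j' => hall j'⟩
      · push_neg at hall
        obtain ⟨j', hj'⟩ := hall
        obtain ⟨r, hr⟩ := ENNReal.exists_nat_gt hj'
        have htuniv : t ∈ ⋃ n, spanningSets μ n := by
          rw [iUnion_spanningSets]; trivial
        obtain ⟨n, hn⟩ := Set.mem_iUnion.mp htuniv
        exact Or.inr (Set.mem_iUnion.mpr ⟨(j', r, n), ⟨ht, hr.le⟩, hn⟩)
    have hex : ∃ p : ℕ × ℕ × ℕ,
        0 < μ (Y ∩ {t | g p.1 t ≤ (p.2.1 : ℝ≥0∞)} ∩ spanningSets μ p.2.2) := by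
      by_contra hno
      push_neg at hno
      have : μ Y = 0 := by
        refine measure_mono_null hcover (measure_union_null hZ (measure_iUnion_null fun p => ?_))
        exact le_antisymm (hno p) (zero_le)
      exact absurd this hpos.ne'
    obtain ⟨⟨j', r, n⟩, hG⟩ := hex
    set G := Y ∩ {t | g j' t ≤ (r : ℝ≥0∞)} ∩ spanningSets μ n with hGdef
    have hGm : MeasurableSet G := by
      refine (((hFm.inter ((hgm j) (measurableSet_singleton ⊤))).inter
        ((hgm j') measurableSet_Iic)).inter (measurableSet_spanningSets μ n))
    have hGF : G ⊆ F := fun t ht => ht.1.1.1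
    have hjj' : j < j' := by
      obtain ⟨t₀, ht₀⟩ := nonempty_of_measure_ne_zero hG.ne'
      by_contra hle
      push_neg at hle
      have h1 : g j t₀ ≤ g j' t₀ := hganti t₀ hle
      rw [ht₀.1.1.2] at h1
      exact absurd (h1.trans ht₀.1.2) (by simp)
    refine ⟨G, j, j', hGF, hGm, hkj, hjj', ?_, ?_⟩
    · have : ∫⁻ t in G, g j t ∂μ = ⊤ := by
        rw [setLIntegral_congr_fun hGm (fun t ht => ht.1.1.2), setLIntegral_const]
        simp [hG.ne']
      rw [this]; exact le_top
    · intro j'' hj''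
      refine hrem G hGF hGm j'' (hkj.trans (hjj'.le.trans hj'')) ?_
      have hb : ∫⁻ t in G, g j'' t ∂μ ≤ (r : ℝ≥0∞) * μ (spanningSets μ n) := by
        calc ∫⁻ t in G, g j'' t ∂μ ≤ ∫⁻ t in G, g j' t ∂μ :=
              lintegral_mono fun t => hganti t hj''
        _ ≤ ∫⁻ _t in G, (r : ℝ≥0∞) ∂μ := setLIntegral_mono measurable_const fun t ht => ht.1.2
        _ = (r : ℝ≥0∞) * μ G := setLIntegral_const _ _
        _ ≤ (r : ℝ≥0∞) * μ (spanningSets μ n) :=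
              mul_le_mul_right (measure_mono fun t ht => ht.2) _
      exact (hb.trans_lt (ENNReal.mul_lt_top (ENNReal.natCast_lt_top r)
        (measure_spanningSets_lt_top μ n))).ne
  · push_neg at hY
    have hk0 : μ (F ∩ {t | g k t = ⊤}) = 0 := le_antisymm (hY k le_rfl) (zero_le)
    set V : ℕ → Set T := fun n => F ∩ {t | g k t ≤ (n : ℝ≥0∞)} ∩ spanningSets μ n with hVdef
    have hVm : ∀ n, MeasurableSet (V n) := fun n =>
      (hFm.inter ((hgm k) measurableSet_Iic)).inter (measurableSet_spanningSets μ n)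
    have hVmono : Monotone V := by
      intro a b hab t ht
      refine ⟨⟨ht.1.1, ?_⟩, monotone_spanningSets μ hab ht.2⟩
      exact le_trans ht.1.2 (by exact_mod_cast hab : (a:ℝ≥0∞) ≤ b)
    have hVunion : (⋃ n, V n) = F ∩ {t | g k t < ⊤} := by
      apply Set.eq_of_subset_of_subset
      · refine Set.iUnion_subset fun n t ht => ⟨ht.1.1, ht.1.2.trans_lt (ENNReal.natCast_lt_top n)⟩
      · intro t ht
        obtain ⟨r, hr⟩ := ENNReal.exists_nat_gt ht.2.ne
        have htuniv : t ∈ ⋃ n, spanningSets μ n := by rw [iUnion_spanningSets]; trivial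
        obtain ⟨n₂, hn₂⟩ := Set.mem_iUnion.mp htuniv
        refine Set.mem_iUnion.mpr ⟨max r n₂, ⟨ht.1, ?_⟩, monotone_spanningSets μ (le_max_right r n₂) hn₂⟩
        exact hr.le.trans (by exact_mod_cast Nat.cast_le.mpr (le_max_left r n₂))
    have hind : ∀ t, (⨆ n, (V n).indicator (g k) t) = (⋃ n, V n).indicator (g k) t := by
      intro t
      refine le_antisymm (iSup_le fun m =>
        Set.indicator_le_indicator_of_subset (Set.subset_iUnion V m) (fun _ => zero_le) t) ?_
      by_cases ht : t ∈ ⋃ n, V n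
      · obtain ⟨n, hn⟩ := Set.mem_iUnion.mp ht
        rw [Set.indicator_of_mem ht]
        calc g k t = (V n).indicator (g k) t := (Set.indicator_of_mem hn _).symm
        _ ≤ ⨆ n, (V n).indicator (g k) t := le_iSup (fun n => (V n).indicator (g k) t) n
      · rw [Set.indicator_of_notMem ht]; exact zero_le
    have hsup : (⨆ n, ∫⁻ t in V n, g k t ∂μ) = ∫⁻ t in ⋃ n, V n, g k t ∂μ := by
      calc (⨆ n, ∫⁻ t in V n, g k t ∂μ) = ⨆ n, ∫⁻ t, (V n).indicator (g k) t ∂μ := by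
            refine iSup_congr fun n => (lintegral_indicator (hVm n) _).symm
      _ = ∫⁻ t, ⨆ n, (V n).indicator (g k) t ∂μ := by
            refine (lintegral_iSup (fun n => (hgm k).indicator (hVm n)) ?_).symm
            intro a b hab t
            exact Set.indicator_le_indicator_of_subset (hVmono hab) (fun _ => zero_le) t
      _ = ∫⁻ t, (⋃ n, V n).indicator (g k) t ∂μ := by
            exact lintegral_congr fun t => hind t
      _ = ∫⁻ t in ⋃ n, V n, g k t ∂μ :=
            lintegral_indicator (MeasurableSet.iUnion hVm) _
    have htop : ∫⁻ t in ⋃ n, V n, g k t ∂μ = ⊤ := by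
      have hsub : F ⊆ (⋃ n, V n) ∪ (F ∩ {t | g k t = ⊤}) := by
        intro t ht
        rcases eq_or_ne (g k t) ⊤ with he | he
        · exact Or.inr ⟨ht, he⟩
        · exact Or.inl (hVunion ▸ ⟨ht, lt_top_iff_ne_top.mpr he⟩)
      have hle : ∫⁻ t in F, g k t ∂μ ≤
          ∫⁻ t in ⋃ n, V n, g k t ∂μ + ∫⁻ t in F ∩ {t | g k t = ⊤}, g k t ∂μ :=
        le_trans (lintegral_mono' (Measure.restrict_mono hsub le_rfl) le_rfl)
          (lintegral_union_le _ _ _)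
      rw [setLIntegral_measure_zero _ _ hk0, add_zero, hF k le_rfl] at hle
      exact top_le_iff.mp hle
    have hone : ∃ n, 1 ≤ ∫⁻ t in V n, g k t ∂μ := by
      have : (1:ℝ≥0∞) < ⨆ n, ∫⁻ t in V n, g k t ∂μ := by
        rw [hsup, htop]; exact one_lt_top
      obtain ⟨n, hn⟩ := lt_iSup_iff.mp this
      exact ⟨n, hn.le⟩
    obtain ⟨n, hn⟩ := hone
    have hGF : V n ⊆ F := fun t ht => ht.1.1
    refine ⟨V n, k, k + 1, hGF, hVm n, le_rfl, Nat.lt_succ_self k, hn, ?_⟩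
    intro j hj
    refine hrem (V n) hGF (hVm n) j (le_trans (Nat.le_succ k) hj) ?_
    have hb : ∫⁻ t in V n, g j t ∂μ ≤ (n : ℝ≥0∞) * μ (spanningSets μ n) := by
      calc ∫⁻ t in V n, g j t ∂μ ≤ ∫⁻ t in V n, g k t ∂μ :=
            lintegral_mono fun t => hganti t (le_trans (Nat.le_succ k) hj)
      _ ≤ ∫⁻ _t in V n, (n : ℝ≥0∞) ∂μ := setLIntegral_mono measurable_const fun t ht => ht.1.2
      _ = (n : ℝ≥0∞) * μ (V n) := setLIntegral_const _ _
      _ ≤ (n : ℝ≥0∞) * μ (spanningSets μ n) :=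
            mul_le_mul_right (measure_mono fun t ht => ht.2) _
    exact (hb.trans_lt (ENNReal.mul_lt_top (ENNReal.natCast_lt_top n)
      (measure_spanningSets_lt_top μ n))).ne

lemma aux_core [SigmaFinite μ] (hna : IsNonatomic μ) (g : ℕ → T → ℝ≥0∞)
    (hgm : ∀ k, Measurable (g k)) (hganti : ∀ t, Antitone fun k => g k t)
    (hg : ∀ k, ∫⁻ t, g k t ∂μ = ⊤) :
    ∃ D : ℕ → Set T, (∀ i, MeasurableSet (D i)) ∧ Pairwise (Function.onFun Disjoint D) ∧
      ∀ i, ∃ m, i ≤ m ∧ 1 ≤ ∫⁻ t in D i, g m t ∂μ := by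
  classical
  set Z : Set T := ⋂ j, {t | g j t = ⊤} with hZdef
  have hZm : MeasurableSet Z :=
    MeasurableSet.iInter fun j => (hgm j) (measurableSet_singleton ⊤)
  have hZtop : ∀ t ∈ Z, ∀ j, g j t = ⊤ := fun t ht j => Set.mem_iInter.mp ht j
  by_cases hZ : 0 < μ Z
  · -- Case A : the set where all g j are infinite has positive measure
    have hstep : ∀ s : {s : Set T // MeasurableSet s ∧ 0 < μ s ∧ s ⊆ Z},
        ∃ s' : {s : Set T // MeasurableSet s ∧ 0 < μ s ∧ s ⊆ Z},
          s'.1 ⊆ s.1 ∧ 0 < μ (s.1 \ s'.1) := by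
      rintro ⟨s, hsm, hspos, hsZ⟩
      obtain ⟨t, hts, htm, htpos, htlt⟩ := hna s hsm hspos
      refine ⟨⟨t, htm, htpos, hts.trans hsZ⟩, hts, ?_⟩
      by_contra hz
      push_neg at hz
      have h0 : μ (s \ t) = 0 := le_antisymm hz (zero_le)
      have : μ s ≤ μ t := by
        calc μ s ≤ μ (t ∪ (s \ t)) := measure_mono (fun x hx => by
          by_cases hxt : x ∈ t
          · exact Or.inl hxt
          · exact Or.inr ⟨hx, hxt⟩)
        _ ≤ μ t + μ (s \ t) := measure_union_le _ _
        _ = μ t := by rw [h0, add_zero]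
      exact absurd this (not_le.mpr htlt)
    choose f hf1 hf2 using hstep
    set z : ℕ → {s : Set T // MeasurableSet s ∧ 0 < μ s ∧ s ⊆ Z} :=
      fun n => Nat.rec ⟨Z, hZm, hZ, subset_rfl⟩ (fun _ ih => f ih) n with hzdef
    have hzsucc : ∀ n, z (n + 1) = f (z n) := fun n => rfl
    have hzanti : ∀ i j, i ≤ j → (z j).1 ⊆ (z i).1 := by
      intro i j hij
      induction j with
      | zero => rw [Nat.le_zero.mp hij]
      | succ j ih =>
        rcases Nat.lt_or_ge i (j+1) with h | h
        · exact ((hzsucc j ▸ hf1 (z j)) : (z (j+1)).1 ⊆ (z j).1).trans (ih (Nat.lt_succ_iff.mp h))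
        · rw [Nat.le_antisymm hij h]
    refine ⟨fun i => (z i).1 \ (z (i+1)).1,
      fun i => (z i).2.1.diff (z (i+1)).2.1, ?_, ?_⟩
    · intro i j hij
      rcases Nat.lt_or_ge i j with h | h
      · refine Set.disjoint_left.mpr fun t ht ht' => ?_
        exact ht.2 (hzanti (i+1) j h ht'.1)
      · refine Set.disjoint_left.mpr fun t ht ht' => ?_
        exact ht'.2 (hzanti (j+1) i (Nat.lt_of_le_of_ne h (Ne.symm hij)) ht.1)
    · intro i
      refine ⟨i, le_rfl, ?_⟩
      have hpos : 0 < μ ((z i).1 \ (z (i+1)).1) := hzsucc i ▸ hf2 (z i)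
      have : ∫⁻ t in (z i).1 \ (z (i+1)).1, g i t ∂μ = ⊤ := by
        rw [setLIntegral_congr_fun ((z i).2.1.diff (z (i+1)).2.1)
          (fun t ht => hZtop t ((z i).2.2.2 ht.1) i), setLIntegral_const]
        simp [hpos.ne']
      rw [this]; exact le_top
  · -- Case B : μ Z = 0
    have hZ0 : μ Z = 0 := le_antisymm (not_lt.mp hZ) (zero_le)
    set Q : Set T × ℕ → Prop :=
      fun p => MeasurableSet p.1 ∧ ∀ j, p.2 ≤ j → ∫⁻ t in p.1, g j t ∂μ = ⊤ with hQdef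
    have hstep : ∀ p : Subtype Q, ∃ q : Subtype Q,
        q.1.1 ⊆ p.1.1 ∧ p.1.2 < q.1.2 ∧
          ∃ m, p.1.2 ≤ m ∧ 1 ≤ ∫⁻ t in p.1.1 \ q.1.1, g m t ∂μ := by
      rintro ⟨⟨F, k⟩, hFm, hF⟩
      obtain ⟨G, m, m', hGF, hGm, hkm, hmm', hG1, hrem⟩ :=
        aux_step g hgm hganti F hFm
          (measure_mono_null Set.inter_subset_right hZ0) k hF
      refine ⟨⟨(F \ G, m'), hFm.diff hGm, hrem⟩, Set.diff_subset, lt_of_le_of_lt hkm hmm',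
        m, hkm, ?_⟩
      rwa [Set.diff_diff_cancel_left hGF]
    choose f hf1 hf2 m hm1 hm2 using hstep
    set z : ℕ → Subtype Q :=
      fun n => Nat.rec ⟨(Set.univ, 0), MeasurableSet.univ,
        fun j _ => by rw [Measure.restrict_univ]; exact hg j⟩ (fun _ ih => f ih) n with hzdef
    have hzsucc : ∀ n, z (n + 1) = f (z n) := fun n => rfl
    have hzanti : ∀ i j, i ≤ j → (z j).1.1 ⊆ (z i).1.1 := by
      intro i j hij
      induction j with
      | zero => rw [Nat.le_zero.mp hij]
      | succ j ih =>
        rcases Nat.lt_or_ge i (j+1) with h | h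
        · exact ((hzsucc j ▸ hf1 (z j)) : (z (j+1)).1.1 ⊆ (z j).1.1).trans
            (ih (Nat.lt_succ_iff.mp h))
        · rw [Nat.le_antisymm hij h]
    have hkmono : ∀ i, i ≤ (z i).1.2 := by
      intro i
      induction i with
      | zero => exact Nat.zero_le _
      | succ i ih =>
        have : (z i).1.2 < (z (i+1)).1.2 := hzsucc i ▸ hf2 (z i)
        omega
    refine ⟨fun i => (z i).1.1 \ (z (i+1)).1.1,
      fun i => (z i).2.1.diff (z (i+1)).2.1, ?_, ?_⟩
    · intro i j hij
      rcases Nat.lt_or_ge i j with h | h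
      · refine Set.disjoint_left.mpr fun t ht ht' => ?_
        exact ht.2 (hzanti (i+1) j h ht'.1)
      · refine Set.disjoint_left.mpr fun t ht ht' => ?_
        exact ht'.2 (hzanti (j+1) i (Nat.lt_of_le_of_ne h (Ne.symm hij)) ht.1)
    · intro i
      refine ⟨m (z i), (hkmono i).trans (hm1 (z i)), ?_⟩
      have := hm2 (z i)
      rwa [← hzsucc i] at this


/-- disjoint decreasing sequences of sets carrying infinite
modular. -/
theorem stmt14 [SigmaFinite μ] (hna : IsNonatomic μ) (P : MOFunction T μ)
    (u : T → ℝ) (hum : Measurable u) (hfin : P.modular u < ⊤)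
    (hinf : ∀ l : ℝ, 1 < l → P.modular (fun t => l * u t) = ⊤) :
    ∃ A B : ℕ → Set T,
      (∀ n, MeasurableSet (A n)) ∧ (∀ n, MeasurableSet (B n)) ∧
      (∀ n, A (n + 1) ⊆ A n) ∧ (∀ n, B (n + 1) ⊆ B n) ∧
      (⋂ n, A n) = ∅ ∧ (⋂ n, B n) = ∅ ∧
      (∀ n, A n ∩ B n = ∅) ∧
      (∀ n, ∀ l : ℝ, 1 < l →
        P.modular (fun t => l * Set.indicator (A n) u t) = ⊤ ∧
        P.modular (fun t => l * Set.indicator (B n) u t) = ⊤) := by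
  classical
  set c : ℕ → ℝ := fun k => 1 + 1 / ((k : ℝ) + 1) with hcdef
  have hc1 : ∀ k, 1 < c k := by
    intro k
    have h1 : (0:ℝ) < 1 / ((k:ℝ) + 1) := by positivity
    simp only [hcdef]; linarith
  have hcanti : ∀ j k : ℕ, j ≤ k → c k ≤ c j := by
    intro j k hjk
    have h1 : (0:ℝ) < (j:ℝ) + 1 := by positivity
    have h2 : (j:ℝ) + 1 ≤ (k:ℝ) + 1 := by
      have := (Nat.cast_le (α := ℝ)).mpr hjk; linarith
    have : (1:ℝ) / ((k:ℝ)+1) ≤ 1 / ((j:ℝ)+1) := one_div_le_one_div_of_le h1 h2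
    simp only [hcdef]; linarith
  have hcex : ∀ l : ℝ, 1 < l → ∃ k, c k ≤ l := by
    intro l hl
    obtain ⟨n, hn⟩ := exists_nat_ge (1 / (l - 1))
    refine ⟨n, ?_⟩
    have hl1 : (0:ℝ) < l - 1 := by linarith
    have hn1 : 1 / (l - 1) < (n:ℝ) + 1 := lt_of_le_of_lt hn (by linarith)
    have h2 : 1 / ((n:ℝ) + 1) < l - 1 := by
      rw [div_lt_iff₀ (by positivity)]
      rw [div_lt_iff₀ hl1] at hn1
      nlinarith
    simp only [hcdef]; linarith
  have hmono_ae : ∀ᵐ t ∂μ, Monotone (P.toFun t) := by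
    filter_upwards [P.convex', P.zero', P.top'] with t hconv h0 htop
    exact aux_monotone _ hconv h0 htop
  have hex : ∀ k : ℕ, ∃ g0 : T → ℝ≥0∞, Measurable g0 ∧
      g0 =ᵐ[μ] fun t => P.toFun t (ENNReal.ofReal (c k * |u t|)) := by
    intro k
    exact aux_meas_version P _ ((hum.abs.const_mul (c k)).ennreal_ofReal)
      (fun t => ENNReal.ofReal_ne_top)
  choose g0 hg0m hg0ae using hex
  set g : ℕ → T → ℝ≥0∞ := fun k t => ⨅ j, if j ≤ k then g0 j t else ⊤ with hgdef
  have hgm : ∀ k, Measurable (g k) := by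
    intro k
    refine Measurable.iInf fun j => ?_
    by_cases h : j ≤ k
    · simp only [if_pos h]; exact hg0m j
    · simp only [if_neg h]; exact measurable_const
  have hganti : ∀ t, Antitone fun k => g k t := by
    intro t k k' hkk'
    refine le_iInf fun j => le_trans (iInf_le _ j) ?_
    by_cases h : j ≤ k
    · simp only [if_pos h, if_pos (h.trans hkk')]; exact le_rfl
    · simp only [if_neg h]; exact le_top
  have hgae : ∀ k, g k =ᵐ[μ] fun t => P.toFun t (ENNReal.ofReal (c k * |u t|)) := by
    intro k
    have hall : ∀ᵐ t ∂μ, ∀ j, g0 j t = P.toFun t (ENNReal.ofReal (c j * |u t|)) :=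
      ae_all_iff.mpr hg0ae
    filter_upwards [hmono_ae, hall] with t hmono hjt
    refine le_antisymm (le_trans (iInf_le _ k) ?_) (le_iInf fun j => ?_)
    · rw [if_pos le_rfl, hjt k]
    · by_cases h : j ≤ k
      · rw [if_pos h, hjt j]
        refine hmono (ENNReal.ofReal_le_ofReal ?_)
        exact mul_le_mul_of_nonneg_right (hcanti j k h) (abs_nonneg _)
      · rw [if_neg h]; exact le_top
  have hgint : ∀ k, ∫⁻ t, g k t ∂μ = ⊤ := by
    intro k
    rw [lintegral_congr_ae (hgae k)]
    have h := hinf (c k) (hc1 k)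
    calc ∫⁻ t, P.toFun t (ENNReal.ofReal (c k * |u t|)) ∂μ
        = ∫⁻ t, P.toFun t (ENNReal.ofReal |c k * u t|) ∂μ := by
          refine lintegral_congr fun t => ?_
          rw [abs_mul, abs_of_pos (lt_trans one_pos (hc1 k))]
    _ = ⊤ := by exact h
  obtain ⟨D, hDm, hDdisj, hDsel⟩ := aux_core hna g hgm hganti hgint
  choose m hm1 hm2 using hDsel
  have hCint : ∀ (e : ℕ → ℕ), Function.Injective e → (∀ i, i ≤ e i) →
      ∀ k, ∫⁻ t in ⋃ i, D (e i), g k t ∂μ = ⊤ := by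
    intro e hinj hge k
    rw [lintegral_iUnion (fun i => hDm (e i)) (fun i j hij => hDdisj fun h => hij (hinj h))]
    refine aux_tsum_eq_top _ k fun i hik => ?_
    calc (1:ℝ≥0∞) ≤ ∫⁻ t in D (e i), g (m (e i)) t ∂μ := hm2 (e i)
    _ ≤ ∫⁻ t in D (e i), g k t ∂μ := by
        refine lintegral_mono fun t => hganti t ?_
        exact le_trans hik (le_trans (hge i) (hm1 (e i)))
  have hmod : ∀ (C : Set T), MeasurableSet C → (∀ k, ∫⁻ t in C, g k t ∂μ = ⊤) →
      ∀ l : ℝ, 1 < l → P.modular (fun t => l * C.indicator u t) = ⊤ := by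
    intro C hCm hC l hl
    obtain ⟨k, hck⟩ := hcex l hl
    refine top_le_iff.mp ?_
    have key : ∀ᵐ t ∂μ, t ∈ C → g k t ≤ P.toFun t (ENNReal.ofReal |l * C.indicator u t|) := by
      filter_upwards [hgae k, hmono_ae] with t hgt hmono
      intro ht
      rw [Set.indicator_of_mem ht, hgt]
      refine hmono (ENNReal.ofReal_le_ofReal ?_)
      rw [abs_mul, abs_of_pos (lt_trans one_pos hl)]
      exact mul_le_mul_of_nonneg_right hck (abs_nonneg _)
    calc (⊤:ℝ≥0∞) = ∫⁻ t in C, g k t ∂μ := (hC k).symm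
    _ ≤ ∫⁻ t in C, P.toFun t (ENNReal.ofReal |l * C.indicator u t|) ∂μ :=
        lintegral_mono_ae ((ae_restrict_iff' hCm).mpr key)
    _ ≤ ∫⁻ t, P.toFun t (ENNReal.ofReal |l * C.indicator u t|) ∂μ :=
        lintegral_mono' Measure.restrict_le_self le_rfl
    _ = P.modular (fun t => l * C.indicator u t) := rfl
  refine ⟨fun n => ⋃ i, D (2 * (n + i)), fun n => ⋃ i, D (2 * (n + i) + 1),
    fun n => MeasurableSet.iUnion fun i => hDm _,
    fun n => MeasurableSet.iUnion fun i => hDm _, ?_, ?_, ?_, ?_, ?_, ?_⟩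
  · intro n
    refine Set.iUnion_subset fun i => ?_
    have he : 2 * (n + 1 + i) = 2 * (n + (i + 1)) := by ring
    rw [he]
    exact Set.subset_iUnion (fun i => D (2 * (n + i))) (i + 1)
  · intro n
    refine Set.iUnion_subset fun i => ?_
    have he : 2 * (n + 1 + i) + 1 = 2 * (n + (i + 1)) + 1 := by ring
    rw [he]
    exact Set.subset_iUnion (fun i => D (2 * (n + i) + 1)) (i + 1)
  · rw [Set.eq_empty_iff_forall_notMem]
    intro t ht
    obtain ⟨i0, hi0⟩ := Set.mem_iUnion.mp (Set.mem_iInter.mp ht 0)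
    obtain ⟨i1, hi1⟩ := Set.mem_iUnion.mp (Set.mem_iInter.mp ht (i0 + 1))
    exact Set.disjoint_left.mp (hDdisj (by omega : 2 * (0 + i0) ≠ 2 * (i0 + 1 + i1))) hi0 hi1
  · rw [Set.eq_empty_iff_forall_notMem]
    intro t ht
    obtain ⟨i0, hi0⟩ := Set.mem_iUnion.mp (Set.mem_iInter.mp ht 0)
    obtain ⟨i1, hi1⟩ := Set.mem_iUnion.mp (Set.mem_iInter.mp ht (i0 + 1))
    exact Set.disjoint_left.mp
      (hDdisj (by omega : 2 * (0 + i0) + 1 ≠ 2 * (i0 + 1 + i1) + 1)) hi0 hi1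
  · intro n
    rw [Set.eq_empty_iff_forall_notMem]
    rintro t ⟨ha, hb⟩
    obtain ⟨i, hi⟩ := Set.mem_iUnion.mp ha
    obtain ⟨j, hj⟩ := Set.mem_iUnion.mp hb
    exact Set.disjoint_left.mp (hDdisj (by omega : 2 * (n + i) ≠ 2 * (n + j) + 1)) hi hj
  · intro n l hl
    constructor
    · exact hmod _ (MeasurableSet.iUnion fun i => hDm _)
        (hCint (fun i => 2 * (n + i)) (fun a b h => by dsimp only at h; omega) (fun i => by omega)) l hl
    · exact hmod _ (MeasurableSet.iUnion fun i => hDm _)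
        (hCint (fun i => 2 * (n + i) + 1) (fun a b h => by dsimp only at h; omega) (fun i => by omega)) l hl
end
end
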